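/- Let φ : M → S^n be a smooth map, expressed in a local chart (U, x^i) on M and in the coordinates (ỹ, s) on S^n∖{N,S} with φ(U) contained in the coordinate domain, and set f := φ^n − π/2. Then on any open set D whose closure is compact and contained in U, there exists a constant C > 0 such that, for 0 ≤ j ≤ k−3: (i) |Δf| ≤ C(|f| + |u₀^n|); (ii) |Δ(df)| ≤ C(|f| + |df| + |∇df| + |v₀^n|); (iii) |A^n_{j+1}| ≤ C(|f| + |df|). -/

import Mathlib

noncomputable section

open scoped BigOperators

namespace Polyharm

/-- Partial derivative of a scalar function on `ℝ^d` in the `i`-th coordinate direction. -/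
def pd {d : ℕ} (i : Fin d) (f : (Fin d → ℝ) → ℝ) (x : Fin d → ℝ) : ℝ :=
  fderiv ℝ f x (Pi.single i 1)

/-- Euclidean norm of a finite family of real numbers. -/
def vnorm {ι : Type} [Fintype ι] (f : ι → ℝ) : ℝ :=
  Real.sqrt (∑ i, f i ^ 2)

/-- Local-coordinate data for maps between Riemannian manifolds: the inverse metric
`g^{ij}` and the Christoffel symbols `Γ^k_{ij}` of a chart of the domain `(M,g)`, and
the Christoffel symbols `Γ^α_{βγ}` of a chart of the target `(N,h)`. -/
structure ChartData (m n : ℕ) where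
  ginv : (Fin m → ℝ) → Fin m → Fin m → ℝ
  ΓM : (Fin m → ℝ) → Fin m → Fin m → Fin m → ℝ
  ΓN : (Fin n → ℝ) → Fin n → Fin n → Fin n → ℝ

variable {m n : ℕ}

/-- Smoothness of the domain data. -/
def ChartData.SmoothDomain (P : ChartData m n) : Prop :=
  (∀ i j, ContDiff ℝ (⊤ : ℕ∞) fun x => P.ginv x i j) ∧
  (∀ k i j, ContDiff ℝ (⊤ : ℕ∞) fun x => P.ΓM x k i j)

/-- Smoothness of the target Christoffel symbols. -/
def ChartData.SmoothTarget (P : ChartData m n) : Prop :=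
  ∀ α β γ, ContDiff ℝ (⊤ : ℕ∞) fun y => P.ΓN y α β γ

/-- The chart data comes from Riemannian metrics: `g^{ij}` is symmetric and positive
definite, and the Christoffel symbols are symmetric in their lower indices. -/
def ChartData.Riemannian (P : ChartData m n) : Prop :=
  (∀ x i j, P.ginv x i j = P.ginv x j i) ∧
  (∀ x (v : Fin m → ℝ), v ≠ 0 → 0 < ∑ i, ∑ j, P.ginv x i j * v i * v j) ∧
  (∀ x k i j, P.ΓM x k i j = P.ΓM x k j i) ∧
  (∀ y α β γ, P.ΓN y α β γ = P.ΓN y α γ β)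

/-- The Laplace–Beltrami operator on scalar functions:
`-Δ f = g^{ij} ∂²f/∂x^i∂x^j - g^{ij} Γ^k_{ij} ∂f/∂x^k`. -/
def lap (P : ChartData m n) (f : (Fin m → ℝ) → ℝ) (x : Fin m → ℝ) : ℝ :=
  -((∑ i, ∑ j, P.ginv x i j * pd i (fun z => pd j f z) x)
    - ∑ i, ∑ j, ∑ k, P.ginv x i j * P.ΓM x k i j * pd k f x)

/-- `φ_i^β = ∂φ^β/∂x^i`. -/
def dphi (φ : (Fin m → ℝ) → Fin n → ℝ) (x : Fin m → ℝ) (i : Fin m) (β : Fin n) : ℝ :=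
  pd i (fun z => φ z β) x

/-- `⟨dφ^β, dψ^γ⟩ = g^{ij} φ_i^β ψ_j^γ`. -/
def dpair (P : ChartData m n) (φ ψ : (Fin m → ℝ) → Fin n → ℝ) (x : Fin m → ℝ)
    (β γ : Fin n) : ℝ :=
  ∑ i, ∑ j, P.ginv x i j * dphi φ x i β * dphi ψ x j γ

/-- Components `R^α_{δβγ}` of the curvature tensor of the target, with the sign
convention `R(∂/∂y^β, ∂/∂y^γ)∂/∂y^δ = R^α_{δβγ} ∂/∂y^α` of the paper. -/
def Rc (P : ChartData m n) (y : Fin n → ℝ) (α δ β γ : Fin n) : ℝ :=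
  pd β (fun z => P.ΓN z α γ δ) y - pd γ (fun z => P.ΓN z α β δ) y
    + ∑ μ, (P.ΓN y α β μ * P.ΓN y μ γ δ - P.ΓN y α γ μ * P.ΓN y μ β δ)

/-- `2S^α_{βωϑ} = ∂Γ^α_{βϑ}/∂y^ω + Γ^γ_{βϑ}Γ^α_{ωγ} + ∂Γ^α_{ωϑ}/∂y^β + Γ^γ_{ωϑ}Γ^α_{βγ}`. -/
def Scoef (P : ChartData m n) (y : Fin n → ℝ) (α β ω ϑ : Fin n) : ℝ :=
  (pd ω (fun z => P.ΓN z α β ϑ) y + (∑ γ, P.ΓN y γ β ϑ * P.ΓN y α ω γ)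
    + pd β (fun z => P.ΓN z α ω ϑ) y + ∑ γ, P.ΓN y γ ω ϑ * P.ΓN y α β γ) / 2

/-- The operator
`A^α(η,ξ) = ξ_i^ϑ(-2 g^{ij} φ_j^β Γ^α_{βϑ}) + η^ϑ((Δφ^β)Γ^α_{βϑ} - g^{ij} φ_j^β φ_i^ω S^α_{βωϑ})`. -/
def Aop (P : ChartData m n) (φ : (Fin m → ℝ) → Fin n → ℝ) (η : Fin n → ℝ)
    (ξ : Fin m → Fin n → ℝ) (x : Fin m → ℝ) (α : Fin n) : ℝ :=
  (∑ ϑ, ∑ i, ξ i ϑ * (-2 * ∑ j, ∑ β, P.ginv x i j * dphi φ x j β * P.ΓN (φ x) α β ϑ))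
    + ∑ ϑ, η ϑ * ((∑ β, lap P (fun z => φ z β) x * P.ΓN (φ x) α β ϑ)
        - ∑ i, ∑ j, ∑ β, ∑ ω,
            P.ginv x i j * dphi φ x j β * dphi φ x i ω * Scoef P (φ x) α β ω ϑ)

/-- The operator `A` applied to (the components of) a section `σ` of `φ⁻¹TN`:
`A(σ, ∂σ)`. -/
def Asec (P : ChartData m n) (φ σ : (Fin m → ℝ) → Fin n → ℝ) (x : Fin m → ℝ)
    (α : Fin n) : ℝ :=
  Aop P φ (σ x) (fun i ϑ => pd i (fun z => σ z ϑ) x) x α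

/-- Components of the tension field `τ^α(φ) = -Δφ^α + g^{ij} Γ^α_{ϑβ} φ_i^ϑ φ_j^β`. -/
def tension (P : ChartData m n) (φ : (Fin m → ℝ) → Fin n → ℝ) (x : Fin m → ℝ)
    (α : Fin n) : ℝ :=
  -(lap P (fun z => φ z α) x)
    + ∑ i, ∑ j, ∑ ϑ, ∑ β,
        P.ginv x i j * P.ΓN (φ x) α ϑ β * dphi φ x i ϑ * dphi φ x j β

/-- The components `u_j` of `Δ̄^j τ(φ)`: `u_0 = τ(φ)` and
`u_{j+1} = Δ u_j + A(u_j, ∂u_j)` (local expression of the rough Laplacian). -/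
def uvar (P : ChartData m n) (φ : (Fin m → ℝ) → Fin n → ℝ) :
    ℕ → (Fin m → ℝ) → Fin n → ℝ
  | 0 => tension P φ
  | j+1 => fun x α => lap P (fun z => uvar P φ j z α) x + Asec P φ (uvar P φ j) x α

/-- `v_j = du_j`, i.e. `v_{j i}^α = ∂u_j^α/∂x^i`. -/
def vvar (P : ChartData m n) (φ : (Fin m → ℝ) → Fin n → ℝ) (j : ℕ) (x : Fin m → ℝ)
    (i : Fin m) (α : Fin n) : ℝ :=
  pd i (fun z => uvar P φ j z α) x

/-- Components of the pull-back covariant derivative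
`(∇̄_{∂_i} σ)^γ = ∂σ^γ/∂x^i + Γ^γ_{βδ}(φ) φ_i^β σ^δ`. -/
def covD (P : ChartData m n) (φ σ : (Fin m → ℝ) → Fin n → ℝ) (i : Fin m)
    (x : Fin m → ℝ) (γ : Fin n) : ℝ :=
  pd i (fun z => σ z γ) x + ∑ β, ∑ δ, P.ΓN (φ x) γ β δ * dphi φ x i β * σ x δ

/-- `(Tr_g R^N(X, dφ(·))dφ(·))^α`. -/
def trRphi (P : ChartData m n) (φ X : (Fin m → ℝ) → Fin n → ℝ) (x : Fin m → ℝ)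
    (α : Fin n) : ℝ :=
  ∑ i, ∑ j, ∑ β, ∑ γ, ∑ δ,
    P.ginv x i j * Rc P (φ x) α δ β γ * X x β * dphi φ x i γ * dphi φ x j δ

/-- `(Tr_g R^N(dφ(·), X)dφ(·))^α`. -/
def trRphi2 (P : ChartData m n) (φ X : (Fin m → ℝ) → Fin n → ℝ) (x : Fin m → ℝ)
    (α : Fin n) : ℝ :=
  ∑ i, ∑ j, ∑ β, ∑ γ, ∑ δ,
    P.ginv x i j * Rc P (φ x) α δ β γ * dphi φ x i β * X x γ * dphi φ x j δ

/-- `(Tr_g R^N(∇̄_{(·)}W, Z)dφ(·))^α`. -/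
def trRD (P : ChartData m n) (φ W Z : (Fin m → ℝ) → Fin n → ℝ) (x : Fin m → ℝ)
    (α : Fin n) : ℝ :=
  ∑ i, ∑ j, ∑ β, ∑ γ, ∑ δ,
    P.ginv x i j * Rc P (φ x) α δ β γ * covD P φ W i x β * Z x γ * dphi φ x j δ

/-- `(Tr_g R^N(W, ∇̄_{(·)}Z)dφ(·))^α`. -/
def trRD2 (P : ChartData m n) (φ W Z : (Fin m → ℝ) → Fin n → ℝ) (x : Fin m → ℝ)
    (α : Fin n) : ℝ :=
  ∑ i, ∑ j, ∑ β, ∑ γ, ∑ δ,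
    P.ginv x i j * Rc P (φ x) α δ β γ * W x β * covD P φ Z i x γ * dphi φ x j δ

/-- Local components of Maeta's `k`-tension field `τ_k(φ)`, for `k = 2s`:
`τ_{2s}(φ) = Δ̄^{2s-1}τ(φ) - R^N(Δ̄^{2s-2}τ(φ), dφ(e_j))dφ(e_j)
  - Σ_{ℓ=1}^{s-1}( R^N(∇̄_{e_j}Δ̄^{s+ℓ-2}τ(φ), Δ̄^{s-ℓ-1}τ(φ))dφ(e_j)
                 - R^N(Δ̄^{s+ℓ-2}τ(φ), ∇̄_{e_j}Δ̄^{s-ℓ-1}τ(φ))dφ(e_j) )`,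
and for `k = 2s+1`:
`τ_{2s+1}(φ) = Δ̄^{2s}τ(φ) - R^N(Δ̄^{2s-1}τ(φ), dφ(e_j))dφ(e_j)
  - Σ_{ℓ=1}^{s-1}( R^N(∇̄_{e_j}Δ̄^{s+ℓ-1}τ(φ), Δ̄^{s-ℓ-1}τ(φ))dφ(e_j)
                 - R^N(Δ̄^{s+ℓ-1}τ(φ), ∇̄_{e_j}Δ̄^{s-ℓ-1}τ(φ))dφ(e_j) )
  - R^N(∇̄_{e_j}Δ̄^{s-1}τ(φ), Δ̄^{s-1}τ(φ))dφ(e_j)`. -/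
def tauK (P : ChartData m n) (φ : (Fin m → ℝ) → Fin n → ℝ) (k : ℕ) (x : Fin m → ℝ)
    (α : Fin n) : ℝ :=
  if Even k then
    uvar P φ (k-1) x α - trRphi P φ (uvar P φ (k-2)) x α
      - ∑ ℓ ∈ Finset.Icc 1 (k/2 - 1),
          (trRD P φ (uvar P φ (k/2 + ℓ - 2)) (uvar P φ (k/2 - ℓ - 1)) x α
            - trRD2 P φ (uvar P φ (k/2 + ℓ - 2)) (uvar P φ (k/2 - ℓ - 1)) x α)
  else
    uvar P φ (k-1) x α - trRphi P φ (uvar P φ (k-2)) x α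
      - (∑ ℓ ∈ Finset.Icc 1 (k/2 - 1),
          (trRD P φ (uvar P φ (k/2 + ℓ - 1)) (uvar P φ (k/2 - ℓ - 1)) x α
            - trRD2 P φ (uvar P φ (k/2 + ℓ - 1)) (uvar P φ (k/2 - ℓ - 1)) x α))
      - trRD P φ (uvar P φ (k/2 - 1)) (uvar P φ (k/2 - 1)) x α

/-- Components `(∇dφ)(∂_i,∂_j)^α` of the second fundamental form of `φ`. -/
def sff (P : ChartData m n) (φ : (Fin m → ℝ) → Fin n → ℝ) (x : Fin m → ℝ)
    (i j : Fin m) (α : Fin n) : ℝ :=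
  pd i (fun z => dphi φ z j α) x - (∑ k, P.ΓM x k i j * dphi φ x k α)
    + ∑ β, ∑ γ, P.ΓN (φ x) α β γ * dphi φ x i β * dphi φ x j γ

/-- Christoffel symbols `Γ^α_{βγ}` of the round sphere `S^{d+1}` in the equator
coordinates `S^{d+1}∖{N,S} = (S^d × (0,π), sin²s·g̃ + ds²)`: here `gt = g̃` and
`Γt = Γ̃` are the metric and the Christoffel symbols of the equator `S^d`, the last
coordinate is `s`, and
`Γ^a_{bc} = Γ̃^a_{bc}`, `Γ^n_{bc} = -½ sin(2s) g̃_{bc}`,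
`Γ^a_{nn} = Γ^n_{nn} = Γ^n_{bn} = 0`, `Γ^a_{bn} = (cos s/sin s)δ^a_b`. -/
def sphereΓ (d : ℕ) (gt : (Fin d → ℝ) → Fin d → Fin d → ℝ)
    (Γt : (Fin d → ℝ) → Fin d → Fin d → Fin d → ℝ) :
    (Fin (d+1) → ℝ) → Fin (d+1) → Fin (d+1) → Fin (d+1) → ℝ :=
  fun y α β γ =>
    let s : ℝ := y (Fin.last d)
    let yt : Fin d → ℝ := fun a => y (Fin.castSucc a)
    if hα : (α : ℕ) < d then
      if hβ : (β : ℕ) < d then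
        if hγ : (γ : ℕ) < d then Γt yt ⟨α.1, hα⟩ ⟨β.1, hβ⟩ ⟨γ.1, hγ⟩
        else (Real.cos s / Real.sin s) * (if (α : ℕ) = (β : ℕ) then 1 else 0)
      else
        if (γ : ℕ) < d then
          (Real.cos s / Real.sin s) * (if (α : ℕ) = (γ : ℕ) then 1 else 0)
        else 0
    else
      if hβ : (β : ℕ) < d then
        if hγ : (γ : ℕ) < d then -(1/2) * Real.sin (2*s) * gt yt ⟨β.1, hβ⟩ ⟨γ.1, hγ⟩
        else 0
      else 0

/-- Components of the round metric `sin²s·g̃ + ds²` of `S^{d+1}` in equator coordinates. -/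
def sphereMet (d : ℕ) (gt : (Fin d → ℝ) → Fin d → Fin d → ℝ) :
    (Fin (d+1) → ℝ) → Fin (d+1) → Fin (d+1) → ℝ :=
  fun y β γ =>
    let s : ℝ := y (Fin.last d)
    let yt : Fin d → ℝ := fun a => y (Fin.castSucc a)
    if hβ : (β : ℕ) < d then
      if hγ : (γ : ℕ) < d then Real.sin s ^ 2 * gt yt ⟨β.1, hβ⟩ ⟨γ.1, hγ⟩ else 0
    else if (γ : ℕ) < d then 0 else 1

/-- `gt` is a Riemannian metric on the chart of `S^d` and `Γt` is the family of
Christoffel symbols of its Levi-Civita connection. -/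
def LeviCivita (d : ℕ) (gt : (Fin d → ℝ) → Fin d → Fin d → ℝ)
    (Γt : (Fin d → ℝ) → Fin d → Fin d → Fin d → ℝ) : Prop :=
  (∀ y a b, gt y a b = gt y b a) ∧
  (∀ y (v : Fin d → ℝ), v ≠ 0 → 0 < ∑ a, ∑ b, gt y a b * v a * v b) ∧
  (∀ y a b c, Γt y a b c = Γt y a c b) ∧
  (∀ y a b c, pd c (fun z => gt z a b) y
    = (∑ e, gt y e b * Γt y e c a) + ∑ e, gt y a e * Γt y e c b)

section Toolbox

open Finset in
lemma abs_sum_le' {ι : Type*} (s : Finset ι) (t b : ι → ℝ) (h : ∀ i ∈ s, |t i| ≤ b i) :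
    |∑ i ∈ s, t i| ≤ ∑ i ∈ s, b i :=
  (Finset.abs_sum_le_sum_abs t s).trans (Finset.sum_le_sum h)

lemma vnorm_nonneg {ι : Type} [Fintype ι] (f : ι → ℝ) : 0 ≤ vnorm f := Real.sqrt_nonneg _

lemma abs_le_vnorm {ι : Type} [Fintype ι] (f : ι → ℝ) (i : ι) : |f i| ≤ vnorm f := by
  rw [vnorm, ← Real.sqrt_sq_eq_abs]
  exact Real.sqrt_le_sqrt (Finset.single_le_sum (fun j _ => sq_nonneg (f j)) (Finset.mem_univ i))

lemma vnorm_le_of_forall {ι : Type} [Fintype ι] (f : ι → ℝ) {c : ℝ} (hc : 0 ≤ c)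
    (h : ∀ i, |f i| ≤ c) : vnorm f ≤ Real.sqrt (Fintype.card ι) * c := by
  rw [vnorm]
  have h1 : ∑ i, f i ^ 2 ≤ ∑ _i : ι, c ^ 2 := by
    refine Finset.sum_le_sum fun i _ => ?_
    have := h i; nlinarith [abs_nonneg (f i), sq_abs (f i)]
  have h2 : ∑ _i : ι, c ^ 2 = (Fintype.card ι : ℝ) * c ^ 2 := by
    simp [Finset.sum_const, Finset.card_univ, nsmul_eq_mul]
  calc Real.sqrt (∑ i, f i ^ 2) ≤ Real.sqrt ((Fintype.card ι : ℝ) * c ^ 2) := by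
        exact Real.sqrt_le_sqrt (h2 ▸ h1)
    _ = Real.sqrt (Fintype.card ι) * c := by
        rw [Real.sqrt_mul (by positivity), Real.sqrt_sq hc]

lemma exists_compact_bound {p : ℕ} {s : Set (Fin p → ℝ)} (hs : IsCompact s)
    {A : (Fin p → ℝ) → ℝ} (hA : Continuous A) : ∃ C, 0 < C ∧ ∀ x ∈ s, A x ≤ C := by
  obtain ⟨C, hC⟩ := hs.exists_bound_of_continuousOn hA.continuousOn
  refine ⟨max C 0 + 1, by positivity, fun x hx => ?_⟩
  have := (le_abs_self (A x)).trans ((Real.norm_eq_abs (A x)) ▸ hC x hx)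
  have := le_max_left C 0
  linarith

variable {p q : ℕ}

lemma contDiff_pd (i : Fin p) {f : (Fin p → ℝ) → ℝ} (hf : ContDiff ℝ (⊤ : ℕ∞) f) :
    ContDiff ℝ (⊤ : ℕ∞) (pd i f) :=
  (hf.fderiv_right (by exact_mod_cast le_top)).clm_apply contDiff_const

lemma pd_add {f g : (Fin p → ℝ) → ℝ} (hf : Differentiable ℝ f) (hg : Differentiable ℝ g)
    (i : Fin p) (x : Fin p → ℝ) :
    pd i (fun z => f z + g z) x = pd i f x + pd i g x := by
  unfold pd; rw [fderiv_fun_add (hf x) (hg x)]; rfl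

lemma pd_sub {f g : (Fin p → ℝ) → ℝ} (hf : Differentiable ℝ f) (hg : Differentiable ℝ g)
    (i : Fin p) (x : Fin p → ℝ) :
    pd i (fun z => f z - g z) x = pd i f x - pd i g x := by
  unfold pd; rw [fderiv_fun_sub (hf x) (hg x)]; rfl

lemma pd_neg {f : (Fin p → ℝ) → ℝ} (i : Fin p) (x : Fin p → ℝ) :
    pd i (fun z => -(f z)) x = -(pd i f x) := by
  unfold pd; rw [fderiv_fun_neg]; rfl

lemma pd_const (i : Fin p) (x : Fin p → ℝ) (c : ℝ) : pd i (fun _ => c) x = 0 := by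
  unfold pd; rw [fderiv_fun_const]; rfl

lemma pd_sub_const {f : (Fin p → ℝ) → ℝ} (i : Fin p) (x : Fin p → ℝ) (c : ℝ) :
    pd i (fun z => f z - c) x = pd i f x := by
  unfold pd; rw [fderiv_sub_const]

lemma pd_mul {f g : (Fin p → ℝ) → ℝ} (hf : Differentiable ℝ f) (hg : Differentiable ℝ g)
    (i : Fin p) (x : Fin p → ℝ) :
    pd i (fun z => f z * g z) x = pd i f x * g x + f x * pd i g x := by
  unfold pd; rw [fderiv_fun_mul (hf x) (hg x)]
  simp [ContinuousLinearMap.add_apply, ContinuousLinearMap.smul_apply]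
  ring

lemma pd_sum {ι : Type*} (s : Finset ι) {f : ι → (Fin p → ℝ) → ℝ}
    (hf : ∀ t ∈ s, Differentiable ℝ (f t)) (i : Fin p) (x : Fin p → ℝ) :
    pd i (fun z => ∑ t ∈ s, f t z) x = ∑ t ∈ s, pd i (f t) x := by
  unfold pd; rw [fderiv_fun_sum (fun t ht => (hf t ht) x)]; simp

end Toolbox
section Toolbox2
variable {p q : ℕ}

lemma htop1 : ((⊤:ℕ∞) : WithTop ℕ∞) + 1 ≤ ((⊤:ℕ∞) : WithTop ℕ∞) := by
  have : ((⊤:ℕ∞) : WithTop ℕ∞) + 1 = ((⊤:ℕ∞) : WithTop ℕ∞) := by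
    norm_cast
  rw [this]

lemma htop2 : (2 : WithTop ℕ∞) ≤ ((⊤:ℕ∞) : WithTop ℕ∞) := by
  rw [show (2 : WithTop ℕ∞) = ((2:ℕ∞) : WithTop ℕ∞) by norm_cast]
  exact WithTop.coe_le_coe.mpr le_top

lemma htop3 : ((⊤:ℕ∞) : WithTop ℕ∞) ≠ 0 := by
  simp

lemma fderiv_contDiff {f : (Fin p → ℝ) → ℝ} (hf : ContDiff ℝ (⊤ : ℕ∞) f) :
    ContDiff ℝ (⊤ : ℕ∞) (fderiv ℝ f) := hf.fderiv_right htop1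

lemma pd_pd {f : (Fin p → ℝ) → ℝ} (hf : ContDiff ℝ (⊤ : ℕ∞) f) (i j : Fin p) (x : Fin p → ℝ) :
    pd i (pd j f) x = fderiv ℝ (fderiv ℝ f) x (Pi.single i 1) (Pi.single j 1) := by
  have hdf : DifferentiableAt ℝ (fderiv ℝ f) x :=
    ((fderiv_contDiff hf).differentiable htop3) x
  have : pd j f = fun z => (fderiv ℝ f z) (Pi.single j 1) := rfl
  rw [this]
  unfold pd
  rw [fderiv_clm_apply hdf (differentiableAt_const _)]
  simp

lemma pd_comm {f : (Fin p → ℝ) → ℝ} (hf : ContDiff ℝ (⊤ : ℕ∞) f) (i j : Fin p) (x : Fin p → ℝ) :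
    pd i (pd j f) x = pd j (pd i f) x := by
  rw [pd_pd hf, pd_pd hf]
  exact (hf.contDiffAt).isSymmSndFDerivAt (by rw [minSmoothness_of_isRCLikeNormedField]; exact htop2) _ _

lemma pd_proj_comp {φ : (Fin p → ℝ) → Fin q → ℝ} {x : Fin p → ℝ}
    (hφ : DifferentiableAt ℝ φ x) (i : Fin p) (ω : Fin q) :
    pd i (fun z => φ z ω) x = fderiv ℝ φ x (Pi.single i 1) ω := by
  unfold pd
  have h := ((ContinuousLinearMap.proj (R := ℝ) (φ := fun _ : Fin q => ℝ) ω).hasFDerivAt.comp x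
    hφ.hasFDerivAt).fderiv
  rw [show (fun z => φ z ω) = (ContinuousLinearMap.proj (R := ℝ) (φ := fun _ : Fin q => ℝ) ω) ∘ φ from rfl, h]
  rfl

lemma pd_comp {F : (Fin q → ℝ) → ℝ} {φ : (Fin p → ℝ) → Fin q → ℝ} {x : Fin p → ℝ}
    (hF : DifferentiableAt ℝ F (φ x)) (hφ : DifferentiableAt ℝ φ x) (i : Fin p) :
    pd i (fun z => F (φ z)) x = ∑ ω, pd ω F (φ x) * pd i (fun z => φ z ω) x := by
  have hcomp : pd i (fun z => F (φ z)) x = fderiv ℝ F (φ x) (fderiv ℝ φ x (Pi.single i 1)) := by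
    unfold pd
    rw [show (fun z => F (φ z)) = F ∘ φ from rfl, fderiv_comp x hF hφ]
    rfl
  rw [hcomp]
  set v := fderiv ℝ φ x (Pi.single i 1) with hv
  have hexp : v = ∑ ω, v ω • (Pi.single ω 1 : Fin q → ℝ) := by
    funext j
    simp [Finset.sum_apply, Pi.single_apply]
  rw [hexp, map_sum]
  refine Finset.sum_congr rfl fun ω _ => ?_
  rw [map_smul]
  have hvω : v ω = pd i (fun z => φ z ω) x := (pd_proj_comp hφ i ω).symm
  rw [smul_eq_mul, hvω, mul_comm]
  rfl

end Toolbox2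
section Toolbox3
variable {p q : ℕ}

lemma contDiff_comp_of_contDiffOn {V : Set (Fin q → ℝ)}
    {F : (Fin q → ℝ) → ℝ} (hF : ContDiffOn ℝ (⊤:ℕ∞) F V)
    {φ : (Fin p → ℝ) → Fin q → ℝ} (hφ : ContDiff ℝ (⊤:ℕ∞) φ) (hmem : ∀ x, φ x ∈ V) :
    ContDiff ℝ (⊤:ℕ∞) (fun x => F (φ x)) := by
  rw [← contDiffOn_univ]
  exact hF.comp (hφ.contDiffOn) (fun x _ => hmem x)

lemma contDiff_pd_comp_of_contDiffOn {V : Set (Fin q → ℝ)} (hV : IsOpen V)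
    {F : (Fin q → ℝ) → ℝ} (hF : ContDiffOn ℝ (⊤:ℕ∞) F V)
    {φ : (Fin p → ℝ) → Fin q → ℝ} (hφ : ContDiff ℝ (⊤:ℕ∞) φ) (hmem : ∀ x, φ x ∈ V)
    (ω : Fin q) : ContDiff ℝ (⊤:ℕ∞) (fun x => pd ω F (φ x)) := by
  have hFD : ContDiffOn ℝ (⊤:ℕ∞) (fderivWithin ℝ F V) V :=
    hF.fderivWithin hV.uniqueDiffOn htop1
  have heq : (fun x => pd ω F (φ x)) = fun x => (fderivWithin ℝ F V (φ x)) (Pi.single ω 1) := by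
    funext x
    unfold pd
    rw [fderivWithin_of_isOpen hV (hmem x)]
  rw [heq]
  have h2 : ContDiff ℝ (⊤:ℕ∞) (fun x => fderivWithin ℝ F V (φ x)) := by
    rw [← contDiffOn_univ]
    exact hFD.comp hφ.contDiffOn (fun x _ => hmem x)
  exact h2.clm_apply contDiff_const

end Toolbox3

section Sphere
variable {d : ℕ}

/-- The restriction CLM dropping the last coordinate. -/
def restr (d : ℕ) : (Fin (d+1) → ℝ) →L[ℝ] (Fin d → ℝ) :=
  ContinuousLinearMap.pi (fun a => ContinuousLinearMap.proj a.castSucc)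

lemma restr_apply (y : Fin (d+1) → ℝ) : restr d y = fun a => y a.castSucc := rfl

lemma restr_single_last : restr d (Pi.single (Fin.last d) (1:ℝ)) = 0 := by
  funext a
  simp [restr_apply]

lemma restr_single_castSucc (c : Fin d) :
    restr d (Pi.single (Fin.castSucc c) (1:ℝ)) = Pi.single c 1 := by
  funext a
  have hr : (restr d) (Pi.single (Fin.castSucc c) (1:ℝ)) a
      = (Pi.single (Fin.castSucc c) (1:ℝ) : Fin (d+1) → ℝ) a.castSucc := rfl
  rw [hr]
  rcases eq_or_ne a c with h | h
  · subst h; simp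
  · rw [Pi.single_eq_of_ne (by simpa [Fin.castSucc_inj] using h), Pi.single_eq_of_ne h]

variable {gt : (Fin d → ℝ) → Fin d → Fin d → ℝ}
  {Γt : (Fin d → ℝ) → Fin d → Fin d → Fin d → ℝ}

/-- The `Γ^n_{βγ}` component of the sphere's Christoffel symbols, as a globally
defined function. -/
def Gl (gt : (Fin d → ℝ) → Fin d → Fin d → ℝ) (β γ : Fin (d+1)) : (Fin (d+1) → ℝ) → ℝ :=
  if hβ : (β:ℕ) < d then
    if hγ : (γ:ℕ) < d then
      fun y => -(1/2) * Real.sin (2 * y (Fin.last d)) * gt (restr d y) ⟨β.1,hβ⟩ ⟨γ.1,hγ⟩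
    else fun _ => 0
  else fun _ => 0

lemma sphereΓ_last_eq (β γ : Fin (d+1)) :
    (fun y => sphereΓ d gt Γt y (Fin.last d) β γ) = Gl gt β γ := by
  funext y
  have hd : ¬((Fin.last d : ℕ) < d) := by simp
  simp only [sphereΓ, Gl]
  rw [dif_neg hd]
  by_cases hβ : (β:ℕ) < d
  · rw [dif_pos hβ, dif_pos hβ]
    by_cases hγ : (γ:ℕ) < d
    · rw [dif_pos hγ, dif_pos hγ]; rfl
    · rw [dif_neg hγ, dif_neg hγ]
  · rw [dif_neg hβ, dif_neg hβ]

/-- `Σ_{ab} |g̃_{ab}|` at the restricted point. -/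
def Gs (gt : (Fin d → ℝ) → Fin d → Fin d → ℝ) (y : Fin (d+1) → ℝ) : ℝ :=
  ∑ a, ∑ b, |gt (restr d y) a b|

/-- `Σ_{cab} |∂_c g̃_{ab}|` at the restricted point. -/
def DGs (gt : (Fin d → ℝ) → Fin d → Fin d → ℝ) (y : Fin (d+1) → ℝ) : ℝ :=
  ∑ c, ∑ a, ∑ b, |pd c (fun z => gt z a b) (restr d y)|

lemma Gs_nonneg (y : Fin (d+1) → ℝ) : 0 ≤ Gs gt y :=
  Finset.sum_nonneg fun _ _ => Finset.sum_nonneg fun _ _ => abs_nonneg _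

lemma DGs_nonneg (y : Fin (d+1) → ℝ) : 0 ≤ DGs gt y :=
  Finset.sum_nonneg fun _ _ => Finset.sum_nonneg fun _ _ =>
    Finset.sum_nonneg fun _ _ => abs_nonneg _

lemma abs_gt_le_Gs (y : Fin (d+1) → ℝ) (a b : Fin d) : |gt (restr d y) a b| ≤ Gs gt y := by
  unfold Gs
  calc |gt (restr d y) a b| ≤ ∑ b', |gt (restr d y) a b'| :=
        Finset.single_le_sum (f := fun b' => |gt (restr d y) a b'|)
          (fun j _ => abs_nonneg _) (Finset.mem_univ b)
    _ ≤ ∑ a', ∑ b', |gt (restr d y) a' b'| :=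
        Finset.single_le_sum (f := fun a' => ∑ b', |gt (restr d y) a' b'|)
          (fun j _ => Finset.sum_nonneg fun _ _ => abs_nonneg _) (Finset.mem_univ a)

lemma abs_pdgt_le_DGs (y : Fin (d+1) → ℝ) (c a b : Fin d) :
    |pd c (fun z => gt z a b) (restr d y)| ≤ DGs gt y := by
  unfold DGs
  calc |pd c (fun z => gt z a b) (restr d y)| ≤ ∑ b', |pd c (fun z => gt z a b') (restr d y)| :=
        Finset.single_le_sum (f := fun b' => |pd c (fun z => gt z a b') (restr d y)|)
          (fun j _ => abs_nonneg _) (Finset.mem_univ b)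
    _ ≤ ∑ a', ∑ b', |pd c (fun z => gt z a' b') (restr d y)| :=
        Finset.single_le_sum (f := fun a' => ∑ b', |pd c (fun z => gt z a' b') (restr d y)|)
          (fun j _ => Finset.sum_nonneg fun _ _ => abs_nonneg _) (Finset.mem_univ a)
    _ ≤ ∑ c', ∑ a', ∑ b', |pd c' (fun z => gt z a' b') (restr d y)| :=
        Finset.single_le_sum (f := fun c' => ∑ a', ∑ b', |pd c' (fun z => gt z a' b') (restr d y)|)
          (fun j _ => Finset.sum_nonneg fun _ _ => Finset.sum_nonneg fun _ _ => abs_nonneg _)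
          (Finset.mem_univ c)

lemma abs_sin_two_bound (s : ℝ) : |Real.sin (2*s)| ≤ 2 * |s - Real.pi/2| := by
  have h : Real.sin (2*s) = -Real.sin (2*s - Real.pi) := by
    rw [Real.sin_sub_pi, neg_neg]
  rw [h, abs_neg]
  calc |Real.sin (2*s - Real.pi)| ≤ |2*s - Real.pi| := Real.abs_sin_le_abs
    _ = 2 * |s - Real.pi/2| := by
        rw [show 2*s - Real.pi = 2*(s - Real.pi/2) by ring, abs_mul]
        norm_num

lemma Gl_bound (β γ : Fin (d+1)) (y : Fin (d+1) → ℝ) :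
    |Gl gt β γ y| ≤ |y (Fin.last d) - Real.pi/2| * Gs gt y := by
  have hnn : 0 ≤ |y (Fin.last d) - Real.pi/2| * Gs gt y :=
    mul_nonneg (abs_nonneg _) (Gs_nonneg y)
  unfold Gl
  split_ifs with hβ hγ
  · have h1 := abs_sin_two_bound (y (Fin.last d))
    have h2 := abs_gt_le_Gs (gt := gt) y ⟨β.1,hβ⟩ ⟨γ.1,hγ⟩
    have h3 : |(-(1/2) * Real.sin (2 * y (Fin.last d)) * gt (restr d y) ⟨β.1,hβ⟩ ⟨γ.1,hγ⟩)|
        = 1/2 * |Real.sin (2 * y (Fin.last d))| * |gt (restr d y) ⟨β.1,hβ⟩ ⟨γ.1,hγ⟩| := by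
      rw [abs_mul, abs_mul]
      norm_num
    rw [h3]
    have h4 := abs_nonneg (Real.sin (2 * y (Fin.last d)))
    have h5 := abs_nonneg (gt (restr d y) ⟨β.1,hβ⟩ ⟨γ.1,hγ⟩)
    have h6 := Gs_nonneg (gt := gt) y
    nlinarith
  · simpa using hnn
  · simpa using hnn

end Sphere
section Sphere2
variable {d : ℕ} {gt : (Fin d → ℝ) → Fin d → Fin d → ℝ}
  {Γt : (Fin d → ℝ) → Fin d → Fin d → Fin d → ℝ}

lemma Gl_hasFDerivAt (hgt : ∀ a b, ContDiff ℝ (⊤:ℕ∞) fun z => gt z a b)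
    {β γ : Fin (d+1)} (hβ : (β:ℕ) < d) (hγ : (γ:ℕ) < d) (y : Fin (d+1) → ℝ) :
    HasFDerivAt (Gl gt β γ)
      ((-(1/2) * Real.sin (2 * y (Fin.last d))) •
          ((fderiv ℝ (fun z => gt z ⟨β.1,hβ⟩ ⟨γ.1,hγ⟩) (restr d y)).comp (restr d))
        + (gt (restr d y) ⟨β.1,hβ⟩ ⟨γ.1,hγ⟩) •
          ((-(1/2) * (Real.cos (2 * y (Fin.last d)) * (2 * 1))) •
            (ContinuousLinearMap.proj (R := ℝ) (φ := fun _ : Fin (d+1) => ℝ) (Fin.last d)))) y := by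
  have hGl : Gl gt β γ = fun y => (-(1/2) * Real.sin (2 * y (Fin.last d)))
      * gt (restr d y) ⟨β.1,hβ⟩ ⟨γ.1,hγ⟩ := by
    unfold Gl; rw [dif_pos hβ, dif_pos hγ]
  rw [hGl]
  have h1 : HasFDerivAt (fun y : Fin (d+1) → ℝ => -(1/2) * Real.sin (2 * y (Fin.last d)))
      ((-(1/2) * (Real.cos (2 * y (Fin.last d)) * (2 * 1))) •
        (ContinuousLinearMap.proj (R := ℝ) (φ := fun _ : Fin (d+1) => ℝ) (Fin.last d))) y := by
    have h0 : HasDerivAt (fun t : ℝ => -(1/2) * Real.sin (2*t))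
        (-(1/2) * (Real.cos (2 * (y (Fin.last d))) * (2 * 1))) (y (Fin.last d)) :=
      (((hasDerivAt_id (y (Fin.last d))).const_mul (2:ℝ)).sin).const_mul (-(1/2))
    have := h0.comp_hasFDerivAt y
      (ContinuousLinearMap.proj (R := ℝ) (φ := fun _ : Fin (d+1) => ℝ) (Fin.last d)).hasFDerivAt
    exact this
  have h2 : HasFDerivAt (fun y : Fin (d+1) → ℝ => gt (restr d y) ⟨β.1,hβ⟩ ⟨γ.1,hγ⟩)
      ((fderiv ℝ (fun z => gt z ⟨β.1,hβ⟩ ⟨γ.1,hγ⟩) (restr d y)).comp (restr d)) y := by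
    exact (((hgt _ _).differentiable htop3 (restr d y)).hasFDerivAt).comp y (restr d).hasFDerivAt
  exact h1.mul h2

lemma pd_Gl_last_bound (hgt : ∀ a b, ContDiff ℝ (⊤:ℕ∞) fun z => gt z a b)
    (β γ : Fin (d+1)) (y : Fin (d+1) → ℝ) :
    |pd (Fin.last d) (Gl gt β γ) y| ≤ Gs gt y := by
  by_cases hβ : (β:ℕ) < d
  · by_cases hγ : (γ:ℕ) < d
    · have hpd : pd (Fin.last d) (Gl gt β γ) y
          = gt (restr d y) ⟨β.1,hβ⟩ ⟨γ.1,hγ⟩ * (-Real.cos (2 * y (Fin.last d))) := by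
        unfold pd
        rw [(Gl_hasFDerivAt hgt hβ hγ y).fderiv]
        rw [ContinuousLinearMap.add_apply, ContinuousLinearMap.smul_apply,
          ContinuousLinearMap.smul_apply, ContinuousLinearMap.smul_apply,
          ContinuousLinearMap.comp_apply, restr_single_last, map_zero]
        have hproj : (ContinuousLinearMap.proj (R := ℝ) (φ := fun _ : Fin (d+1) => ℝ)
            (Fin.last d)) (Pi.single (Fin.last d) (1:ℝ)) = 1 := Pi.single_eq_same _ _
        rw [hproj]
        simp only [smul_eq_mul]
        ring
      rw [hpd, abs_mul, abs_neg]
      have h1 := Real.abs_cos_le_one (2 * y (Fin.last d))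
      have h2 := abs_gt_le_Gs (gt := gt) y ⟨β.1,hβ⟩ ⟨γ.1,hγ⟩
      have h3 := abs_nonneg (gt (restr d y) ⟨β.1,hβ⟩ ⟨γ.1,hγ⟩)
      nlinarith
    · have h0 : Gl gt β γ = fun _ => 0 := by unfold Gl; rw [dif_pos hβ, dif_neg hγ]
      rw [h0, pd_const]
      simpa using Gs_nonneg (gt := gt) y
  · have h0 : Gl gt β γ = fun _ => 0 := by unfold Gl; rw [dif_neg hβ]
    rw [h0, pd_const]
    simpa using Gs_nonneg (gt := gt) y

lemma pd_Gl_castSucc_bound (hgt : ∀ a b, ContDiff ℝ (⊤:ℕ∞) fun z => gt z a b)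
    (c : Fin d) (β γ : Fin (d+1)) (y : Fin (d+1) → ℝ) :
    |pd (Fin.castSucc c) (Gl gt β γ) y| ≤ |y (Fin.last d) - Real.pi/2| * DGs gt y := by
  have hnn : 0 ≤ |y (Fin.last d) - Real.pi/2| * DGs gt y :=
    mul_nonneg (abs_nonneg _) (DGs_nonneg y)
  by_cases hβ : (β:ℕ) < d
  · by_cases hγ : (γ:ℕ) < d
    · have hpd : pd (Fin.castSucc c) (Gl gt β γ) y
          = (-(1/2) * Real.sin (2 * y (Fin.last d)))
            * pd c (fun z => gt z ⟨β.1,hβ⟩ ⟨γ.1,hγ⟩) (restr d y) := by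
        unfold pd
        rw [(Gl_hasFDerivAt hgt hβ hγ y).fderiv]
        rw [ContinuousLinearMap.add_apply, ContinuousLinearMap.smul_apply,
          ContinuousLinearMap.smul_apply, ContinuousLinearMap.smul_apply,
          ContinuousLinearMap.comp_apply, restr_single_castSucc]
        have hproj : (ContinuousLinearMap.proj (R := ℝ) (φ := fun _ : Fin (d+1) => ℝ)
            (Fin.last d)) (Pi.single (Fin.castSucc c) (1:ℝ)) = 0 := by
          show (Pi.single (Fin.castSucc c) (1:ℝ) : Fin (d+1) → ℝ) (Fin.last d) = 0
          exact Pi.single_eq_of_ne (Fin.castSucc_lt_last c).ne' _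
        rw [hproj]
        simp only [smul_eq_mul]
        ring
      rw [hpd, abs_mul]
      have h1 := abs_sin_two_bound (y (Fin.last d))
      have h2 := abs_pdgt_le_DGs (gt := gt) y c ⟨β.1,hβ⟩ ⟨γ.1,hγ⟩
      have h3 := abs_nonneg (pd c (fun z => gt z ⟨β.1,hβ⟩ ⟨γ.1,hγ⟩) (restr d y))
      have h4 : |(-(1/2) * Real.sin (2 * y (Fin.last d)))|
          = 1/2 * |Real.sin (2 * y (Fin.last d))| := by
        rw [abs_mul]; norm_num
      rw [h4]
      have h5 := abs_nonneg (Real.sin (2 * y (Fin.last d)))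
      have h6 := abs_nonneg (y (Fin.last d) - Real.pi/2)
      have h7 := DGs_nonneg (gt := gt) y
      nlinarith
    · have h0 : Gl gt β γ = fun _ => 0 := by unfold Gl; rw [dif_pos hβ, dif_neg hγ]
      rw [h0, pd_const]; simpa using hnn
  · have h0 : Gl gt β γ = fun _ => 0 := by unfold Gl; rw [dif_neg hβ]
    rw [h0, pd_const]; simpa using hnn

/-- The open region of the sphere chart. -/
def Veq (d : ℕ) : Set (Fin (d+1) → ℝ) :=
  {y | 0 < y (Fin.last d) ∧ y (Fin.last d) < Real.pi}

lemma isOpen_Veq : IsOpen (Veq d) := by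
  have : Veq d = (fun y : Fin (d+1) → ℝ => y (Fin.last d)) ⁻¹' (Set.Ioo 0 Real.pi) := rfl
  rw [this]
  exact isOpen_Ioo.preimage (continuous_apply _)

lemma sphereΓ_contDiffOn (hgt : ∀ a b, ContDiff ℝ (⊤:ℕ∞) fun z => gt z a b)
    (hΓt : ∀ a b c, ContDiff ℝ (⊤:ℕ∞) fun z => Γt z a b c) (α β γ : Fin (d+1)) :
    ContDiffOn ℝ (⊤:ℕ∞) (fun y => sphereΓ d gt Γt y α β γ) (Veq d) := by
  have hproj : ContDiff ℝ (⊤:ℕ∞) (fun y : Fin (d+1) → ℝ => y (Fin.last d)) :=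
    (ContinuousLinearMap.proj (R := ℝ) (φ := fun _ : Fin (d+1) => ℝ) (Fin.last d)).contDiff
  have hcs : ∀ c : ℝ, ContDiffOn ℝ (⊤:ℕ∞)
      (fun y : Fin (d+1) → ℝ => Real.cos (y (Fin.last d)) / Real.sin (y (Fin.last d)) * c)
      (Veq d) := by
    intro c
    refine ContDiffOn.mul ?_ contDiffOn_const
    refine ContDiffOn.div ((Real.contDiff_cos.comp hproj).contDiffOn)
      ((Real.contDiff_sin.comp hproj).contDiffOn) ?_
    intro y hy
    exact (Real.sin_pos_of_pos_of_lt_pi hy.1 hy.2).ne'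
  by_cases hα : (α:ℕ) < d
  · by_cases hβ : (β:ℕ) < d
    · by_cases hγ : (γ:ℕ) < d
      · have he : (fun y => sphereΓ d gt Γt y α β γ)
            = fun y => Γt (restr d y) ⟨α.1,hα⟩ ⟨β.1,hβ⟩ ⟨γ.1,hγ⟩ := by
          funext y; simp only [sphereΓ]; rw [dif_pos hα, dif_pos hβ, dif_pos hγ]; rfl
        rw [he]
        exact ((hΓt _ _ _).comp (restr d).contDiff).contDiffOn
      · have he : (fun y => sphereΓ d gt Γt y α β γ)
            = fun y => Real.cos (y (Fin.last d)) / Real.sin (y (Fin.last d))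
                * (if (α:ℕ) = (β:ℕ) then 1 else 0) := by
          funext y; simp only [sphereΓ]; rw [dif_pos hα, dif_pos hβ, dif_neg hγ]
        rw [he]; exact hcs _
    · by_cases hγ : (γ:ℕ) < d
      · have he : (fun y => sphereΓ d gt Γt y α β γ)
            = fun y => Real.cos (y (Fin.last d)) / Real.sin (y (Fin.last d))
                * (if (α:ℕ) = (γ:ℕ) then 1 else 0) := by
          funext y; simp only [sphereΓ]; rw [dif_pos hα, dif_neg hβ, if_pos hγ]
        rw [he]; exact hcs _
      · have he : (fun y => sphereΓ d gt Γt y α β γ) = fun _ => 0 := by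
          funext y; simp only [sphereΓ]; rw [dif_pos hα, dif_neg hβ, if_neg hγ]
        rw [he]; exact contDiffOn_const
  · have he : (fun y => sphereΓ d gt Γt y α β γ) = Gl gt β γ := by
      funext y
      have hd : ¬((Fin.last d : ℕ) < d) := by simp
      simp only [sphereΓ, Gl]
      rw [dif_neg hα]
      by_cases hβ : (β:ℕ) < d
      · rw [dif_pos hβ, dif_pos hβ]
        by_cases hγ : (γ:ℕ) < d
        · rw [dif_pos hγ, dif_pos hγ]; rfl
        · rw [dif_neg hγ, dif_neg hγ]
      · rw [dif_neg hβ, dif_neg hβ]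
    rw [he]
    have hGl : ContDiff ℝ (⊤:ℕ∞) (Gl gt β γ) := by
      unfold Gl
      split_ifs with hβ hγ
      · refine ContDiff.mul ?_ ((hgt _ _).comp (restr d).contDiff)
        exact contDiff_const.mul (Real.contDiff_sin.comp (contDiff_const.mul hproj))
      · exact contDiff_const
      · exact contDiff_const
    exact hGl.contDiffOn

end Sphere2
section Smooth
variable {m d : ℕ} {P : ChartData m (d+1)}
  {gt : (Fin d → ℝ) → Fin d → Fin d → ℝ}
  {Γt : (Fin d → ℝ) → Fin d → Fin d → Fin d → ℝ}
  {φ : (Fin m → ℝ) → Fin (d+1) → ℝ}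

lemma contDiff_proj_comp (hφ : ContDiff ℝ (⊤:ℕ∞) φ) (β : Fin (d+1)) :
    ContDiff ℝ (⊤:ℕ∞) (fun z => φ z β) :=
  (ContinuousLinearMap.proj (R := ℝ) (φ := fun _ : Fin (d+1) => ℝ) β).contDiff.comp hφ

lemma contDiff_dphi (hφ : ContDiff ℝ (⊤:ℕ∞) φ) (i : Fin m) (β : Fin (d+1)) :
    ContDiff ℝ (⊤:ℕ∞) (fun x => dphi φ x i β) :=
  contDiff_pd i (contDiff_proj_comp hφ β)

lemma contDiff_lap (hPdom : P.SmoothDomain) {f : (Fin m → ℝ) → ℝ}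
    (hf : ContDiff ℝ (⊤:ℕ∞) f) : ContDiff ℝ (⊤:ℕ∞) (lap P f) := by
  show ContDiff ℝ (⊤:ℕ∞) fun x =>
    -((∑ i, ∑ j, P.ginv x i j * pd i (fun z => pd j f z) x)
      - ∑ i, ∑ j, ∑ k, P.ginv x i j * P.ΓM x k i j * pd k f x)
  refine ContDiff.neg (ContDiff.sub ?_ ?_)
  · exact ContDiff.sum fun i _ => ContDiff.sum fun j _ =>
      (hPdom.1 i j).mul (contDiff_pd i (contDiff_pd j hf))
  · exact ContDiff.sum fun i _ => ContDiff.sum fun j _ => ContDiff.sum fun k _ =>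
      ((hPdom.1 i j).mul (hPdom.2 k i j)).mul (contDiff_pd k hf)

variable (hΓN : P.ΓN = sphereΓ d gt Γt)
  (hgt : ∀ a b, ContDiff ℝ (⊤ : ℕ∞) fun y => gt y a b)
  (hΓt : ∀ a b c, ContDiff ℝ (⊤ : ℕ∞) fun y => Γt y a b c)
  (hφ : ContDiff ℝ (⊤ : ℕ∞) φ)
  (hchart : ∀ x, 0 < φ x (Fin.last d) ∧ φ x (Fin.last d) < Real.pi)

include hΓN hgt hΓt hφ hchart in
lemma contDiff_ΓN_comp (α β γ : Fin (d+1)) :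
    ContDiff ℝ (⊤:ℕ∞) (fun x => P.ΓN (φ x) α β γ) := by
  have : (fun x => P.ΓN (φ x) α β γ) = fun x => sphereΓ d gt Γt (φ x) α β γ := by
    rw [hΓN]
  rw [this]
  exact contDiff_comp_of_contDiffOn (sphereΓ_contDiffOn hgt hΓt α β γ) hφ hchart

include hΓN hgt hΓt hφ hchart in
lemma contDiff_pdΓN_comp (ω α β γ : Fin (d+1)) :
    ContDiff ℝ (⊤:ℕ∞) (fun x => pd ω (fun y => P.ΓN y α β γ) (φ x)) := by
  have : (fun y => P.ΓN y α β γ) = fun y => sphereΓ d gt Γt y α β γ := by rw [hΓN]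
  rw [this]
  exact contDiff_pd_comp_of_contDiffOn isOpen_Veq (sphereΓ_contDiffOn hgt hΓt α β γ)
    hφ hchart ω

variable (hPdom : P.SmoothDomain)

include hΓN hgt hΓt hφ hchart hPdom in
lemma contDiff_tension (α : Fin (d+1)) :
    ContDiff ℝ (⊤:ℕ∞) (fun x => tension P φ x α) := by
  show ContDiff ℝ (⊤:ℕ∞) fun x => -(lap P (fun z => φ z α) x)
    + ∑ i, ∑ j, ∑ ϑ, ∑ β,
        P.ginv x i j * P.ΓN (φ x) α ϑ β * dphi φ x i ϑ * dphi φ x j β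
  refine ContDiff.add (ContDiff.neg (contDiff_lap hPdom (contDiff_proj_comp hφ α))) ?_
  refine ContDiff.sum fun i _ => ContDiff.sum fun j _ => ContDiff.sum fun ϑ _ =>
    ContDiff.sum fun β _ => ?_
  exact (((hPdom.1 i j).mul (contDiff_ΓN_comp hΓN hgt hΓt hφ hchart α ϑ β)).mul
    (contDiff_dphi hφ i ϑ)).mul (contDiff_dphi hφ j β)

include hΓN hgt hΓt hφ hchart in
lemma contDiff_Scoef_comp (α β ω ϑ : Fin (d+1)) :
    ContDiff ℝ (⊤:ℕ∞) (fun x => Scoef P (φ x) α β ω ϑ) := by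
  show ContDiff ℝ (⊤:ℕ∞) fun x =>
    (pd ω (fun z => P.ΓN z α β ϑ) (φ x) + (∑ γ, P.ΓN (φ x) γ β ϑ * P.ΓN (φ x) α ω γ)
      + pd β (fun z => P.ΓN z α ω ϑ) (φ x) + ∑ γ, P.ΓN (φ x) γ ω ϑ * P.ΓN (φ x) α β γ) / 2
  refine ContDiff.div_const ?_ 2
  refine ContDiff.add (ContDiff.add (ContDiff.add ?_ ?_) ?_) ?_
  · exact contDiff_pdΓN_comp hΓN hgt hΓt hφ hchart ω α β ϑ
  · exact ContDiff.sum fun γ _ => (contDiff_ΓN_comp hΓN hgt hΓt hφ hchart γ β ϑ).mul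
      (contDiff_ΓN_comp hΓN hgt hΓt hφ hchart α ω γ)
  · exact contDiff_pdΓN_comp hΓN hgt hΓt hφ hchart β α ω ϑ
  · exact ContDiff.sum fun γ _ => (contDiff_ΓN_comp hΓN hgt hΓt hφ hchart γ ω ϑ).mul
      (contDiff_ΓN_comp hΓN hgt hΓt hφ hchart α β γ)

include hΓN hgt hΓt hφ hchart hPdom in
lemma contDiff_Asec {σ : (Fin m → ℝ) → Fin (d+1) → ℝ}
    (hσ : ∀ α, ContDiff ℝ (⊤:ℕ∞) (fun x => σ x α)) (α : Fin (d+1)) :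
    ContDiff ℝ (⊤:ℕ∞) (fun x => Asec P φ σ x α) := by
  show ContDiff ℝ (⊤:ℕ∞) fun x =>
    (∑ ϑ, ∑ i, pd i (fun z => σ z ϑ) x
        * (-2 * ∑ j, ∑ β, P.ginv x i j * dphi φ x j β * P.ΓN (φ x) α β ϑ))
      + ∑ ϑ, σ x ϑ * ((∑ β, lap P (fun z => φ z β) x * P.ΓN (φ x) α β ϑ)
          - ∑ i, ∑ j, ∑ β, ∑ ω,
              P.ginv x i j * dphi φ x j β * dphi φ x i ω * Scoef P (φ x) α β ω ϑ)
  refine ContDiff.add ?_ ?_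
  · refine ContDiff.sum fun ϑ _ => ContDiff.sum fun i _ => ?_
    refine (contDiff_pd i (hσ ϑ)).mul (ContDiff.mul contDiff_const ?_)
    exact ContDiff.sum fun j _ => ContDiff.sum fun β _ =>
      ((hPdom.1 i j).mul (contDiff_dphi hφ j β)).mul
        (contDiff_ΓN_comp hΓN hgt hΓt hφ hchart α β ϑ)
  · refine ContDiff.sum fun ϑ _ => (hσ ϑ).mul (ContDiff.sub ?_ ?_)
    · exact ContDiff.sum fun β _ =>
        (contDiff_lap hPdom (contDiff_proj_comp hφ β)).mul
          (contDiff_ΓN_comp hΓN hgt hΓt hφ hchart α β ϑ)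
    · exact ContDiff.sum fun i _ => ContDiff.sum fun j _ => ContDiff.sum fun β _ =>
        ContDiff.sum fun ω _ =>
          (((hPdom.1 i j).mul (contDiff_dphi hφ j β)).mul (contDiff_dphi hφ i ω)).mul
            (contDiff_Scoef_comp hΓN hgt hΓt hφ hchart α β ω ϑ)

include hΓN hgt hΓt hφ hchart hPdom in
lemma contDiff_uvar : ∀ j (α : Fin (d+1)), ContDiff ℝ (⊤:ℕ∞) (fun x => uvar P φ j x α)
  | 0, α => contDiff_tension hΓN hgt hΓt hφ hchart hPdom α
  | (j+1), α => by
    show ContDiff ℝ (⊤:ℕ∞) fun x =>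
      lap P (fun z => uvar P φ j z α) x + Asec P φ (uvar P φ j) x α
    exact (contDiff_lap hPdom (contDiff_uvar j α)).add
      (contDiff_Asec hΓN hgt hΓt hφ hchart hPdom
        (fun α' => contDiff_uvar j α') α)

end Smooth
section Toolbox6
variable {p : ℕ}

lemma mul4_le {a b c e A B C E : ℝ} (ha : |a| ≤ A) (hb : |b| ≤ B) (hc : |c| ≤ C) (he : |e| ≤ E)
    (hA : 0 ≤ A) (hB : 0 ≤ B) (hC : 0 ≤ C) :
    |a * b * c * e| ≤ A * B * C * E := by
  rw [abs_mul, abs_mul, abs_mul]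
  exact mul_le_mul (mul_le_mul (mul_le_mul ha hb (abs_nonneg _) hA) hc (abs_nonneg _)
    (mul_nonneg hA hB)) he (abs_nonneg _) (mul_nonneg (mul_nonneg hA hB) hC)

lemma pd_mul4 {a b c e : (Fin p → ℝ) → ℝ} (ha : Differentiable ℝ a)
    (hb : Differentiable ℝ b) (hc : Differentiable ℝ c) (he : Differentiable ℝ e)
    (i : Fin p) (x : Fin p → ℝ) :
    pd i (fun z => a z * b z * c z * e z) x
      = pd i a x * b x * c x * e x + a x * pd i b x * c x * e x
        + a x * b x * pd i c x * e x + a x * b x * c x * pd i e x := by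
  rw [pd_mul (f := fun z => a z * b z * c z) ((ha.mul hb).mul hc) he,
    pd_mul (f := fun z => a z * b z) (ha.mul hb) hc, pd_mul ha hb]
  ring

lemma contDiff_Gl {d : ℕ} {gt : (Fin d → ℝ) → Fin d → Fin d → ℝ}
    (hgt : ∀ a b, ContDiff ℝ (⊤:ℕ∞) fun z => gt z a b) (β γ : Fin (d+1)) :
    ContDiff ℝ (⊤:ℕ∞) (Gl gt β γ) := by
  have hproj : ContDiff ℝ (⊤:ℕ∞) (fun y : Fin (d+1) → ℝ => y (Fin.last d)) :=
    (ContinuousLinearMap.proj (R := ℝ) (φ := fun _ : Fin (d+1) => ℝ) (Fin.last d)).contDiff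
  unfold Gl
  split_ifs with hβ hγ
  · refine ContDiff.mul ?_ ((hgt _ _).comp (restr d).contDiff)
    exact contDiff_const.mul (Real.contDiff_sin.comp (contDiff_const.mul hproj))
  · exact contDiff_const
  · exact contDiff_const

lemma lap_pd_comm {q : ℕ} (P : ChartData p q) (hPdom : P.SmoothDomain)
    {f : (Fin p → ℝ) → ℝ} (hf : ContDiff ℝ (⊤:ℕ∞) f) (i : Fin p) (x : Fin p → ℝ) :
    lap P (pd i f) x = pd i (lap P f) x
      + (∑ j, ∑ l, pd i (fun z => P.ginv z j l) x * pd j (pd l f) x)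
      - ∑ j, ∑ l, ∑ r, pd i (fun z => P.ginv z j l * P.ΓM z r j l) x * pd r f x := by
  have hg := hPdom.1
  have hΓ := hPdom.2
  have hdf : ∀ j, ContDiff ℝ (⊤:ℕ∞) (pd j f) := fun j => contDiff_pd j hf
  have hdd : ∀ j l, ContDiff ℝ (⊤:ℕ∞) (pd j (pd l f)) := fun j l => contDiff_pd j (hdf l)
  have lap1 : lap P (pd i f) x
      = -((∑ j, ∑ l, P.ginv x j l * pd j (pd l (pd i f)) x)
        - ∑ j, ∑ l, ∑ r, P.ginv x j l * P.ΓM x r j l * pd r (pd i f) x) := rfl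
  have lap2 : lap P f = fun z => -((∑ j, ∑ l, P.ginv z j l * pd j (pd l f) z)
      - ∑ j, ∑ l, ∑ r, P.ginv z j l * P.ΓM z r j l * pd r f z) := rfl
  have hS1 : Differentiable ℝ (fun z => ∑ j, ∑ l, P.ginv z j l * pd j (pd l f) z) :=
    (ContDiff.sum fun j _ => ContDiff.sum fun l _ =>
      (hg j l).mul (hdd j l)).differentiable htop3
  have hS2 : Differentiable ℝ
      (fun z => ∑ j, ∑ l, ∑ r, P.ginv z j l * P.ΓM z r j l * pd r f z) :=
    (ContDiff.sum fun j _ => ContDiff.sum fun l _ => ContDiff.sum fun r _ =>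
      ((hg j l).mul (hΓ r j l)).mul (hdf r)).differentiable htop3
  have e0 : pd i (lap P f) x
      = -(pd i (fun z => ∑ j, ∑ l, P.ginv z j l * pd j (pd l f) z) x
        - pd i (fun z => ∑ j, ∑ l, ∑ r, P.ginv z j l * P.ΓM z r j l * pd r f z) x) := by
    rw [lap2, pd_neg, pd_sub hS1 hS2]
  have e1 : pd i (fun z => ∑ j, ∑ l, P.ginv z j l * pd j (pd l f) z) x
      = ∑ j, ∑ l, (pd i (fun z => P.ginv z j l) x * pd j (pd l f) x
          + P.ginv x j l * pd j (pd l (pd i f)) x) := by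
    rw [pd_sum Finset.univ (fun j _ => (ContDiff.sum fun l _ =>
      (hg j l).mul (hdd j l)).differentiable htop3) i x]
    refine Finset.sum_congr rfl fun j _ => ?_
    rw [pd_sum Finset.univ (fun l _ =>
      ((hg j l).mul (hdd j l)).differentiable htop3) i x]
    refine Finset.sum_congr rfl fun l _ => ?_
    rw [pd_mul ((hg j l).differentiable htop3) ((hdd j l).differentiable htop3) i x]
    congr 1
    rw [pd_comm (hdf l) i j]
    rw [show pd i (pd l f) = pd l (pd i f) from funext fun y => pd_comm hf i l y]
  have e2 : pd i (fun z => ∑ j, ∑ l, ∑ r, P.ginv z j l * P.ΓM z r j l * pd r f z) x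
      = ∑ j, ∑ l, ∑ r, (pd i (fun z => P.ginv z j l * P.ΓM z r j l) x * pd r f x
          + P.ginv x j l * P.ΓM x r j l * pd r (pd i f) x) := by
    rw [pd_sum Finset.univ (fun j _ => (ContDiff.sum fun l _ => ContDiff.sum fun r _ =>
      ((hg j l).mul (hΓ r j l)).mul (hdf r)).differentiable htop3) i x]
    refine Finset.sum_congr rfl fun j _ => ?_
    rw [pd_sum Finset.univ (fun l _ => (ContDiff.sum fun r _ =>
      ((hg j l).mul (hΓ r j l)).mul (hdf r)).differentiable htop3) i x]
    refine Finset.sum_congr rfl fun l _ => ?_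
    rw [pd_sum Finset.univ (fun r _ =>
      (((hg j l).mul (hΓ r j l)).mul (hdf r)).differentiable htop3) i x]
    refine Finset.sum_congr rfl fun r _ => ?_
    rw [pd_mul (((hg j l).mul (hΓ r j l)).differentiable htop3)
      ((hdf r).differentiable htop3) i x]
    congr 1
    rw [pd_comm hf i r]
  rw [e0, e1, e2, lap1]
  simp only [Finset.sum_add_distrib]
  ring

end Toolbox6
lemma abs_add4 (a b c e : ℝ) : |a + b + c + e| ≤ |a| + |b| + |c| + |e| := by
  have a1 := abs_add_le (a+b+c) e
  have a2 := abs_add_le (a+b) c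
  have a3 := abs_add_le a b
  linarith

lemma abs_add_sub3 (a b c : ℝ) : |a + b - c| ≤ |a| + |b| + |c| := by
  have a1 := abs_sub (a+b) c
  have a2 := abs_add_le a b
  linarith

lemma abs_comb4 (a v s t : ℝ) : |a - v + s - t| ≤ |a| + |v| + |s| + |t| := by
  have a1 := abs_sub (a - v + s) t
  have a2 := abs_add_le (a - v) s
  have a3 := abs_sub a v
  linarith

lemma mul3_le {a b c A B C : ℝ} (ha : |a| ≤ A) (hb : |b| ≤ B) (hc : |c| ≤ C)
    (hA : 0 ≤ A) (hB : 0 ≤ B) :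
    |a| * |b| * |c| ≤ A * B * C :=
  mul_le_mul (mul_le_mul ha hb (abs_nonneg _) hA) hc (abs_nonneg _) (mul_nonneg hA hB)

lemma aux_cq {c q s t : ℝ} (hc : 1 ≤ c) (hq : 0 ≤ q) (hs : 0 ≤ s) (ht : 0 ≤ t) :
    c * t * q ≤ c * c * q * (s + t) := by
  nlinarith [mul_nonneg (mul_nonneg (le_trans zero_le_one hc) hq) hs,
    mul_nonneg (mul_nonneg hq ht) (sub_nonneg.mpr hc)]

set_option maxHeartbeats 4000000 in
/-- (Lemma 2.9 of the paper.)
Let `φ : M → S^n` (`n = d+1`) be a smooth map expressed in the equator coordinates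
of the sphere, and set `f := φ^n - π/2`. Then on any open set `D` with compact
closure contained in the chart domain `U` there exists `C > 0` such that, for
`0 ≤ j ≤ k-3`:
(i) `|Δf| ≤ C(|f| + |u₀^n|)`;
(ii) `|Δ(df)| ≤ C(|f| + |df| + |∇df| + |v₀^n|)`;
(iii) `|A^n_{j+1}| ≤ C(|f| + |df|)`. -/
theorem sphere_estimates_A
    {m d : ℕ} (P : ChartData m (d+1))
    (gt : (Fin d → ℝ) → Fin d → Fin d → ℝ)
    (Γt : (Fin d → ℝ) → Fin d → Fin d → Fin d → ℝ)
    (hΓN : P.ΓN = sphereΓ d gt Γt)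
    (hPdom : P.SmoothDomain) (hPriem : P.Riemannian)
    (hgt : ∀ a b, ContDiff ℝ (⊤ : ℕ∞) fun y => gt y a b)
    (hΓt : ∀ a b c, ContDiff ℝ (⊤ : ℕ∞) fun y => Γt y a b c)
    (hLC : LeviCivita d gt Γt)
    (U : Set (Fin m → ℝ)) (hUopen : IsOpen U)
    (φ : (Fin m → ℝ) → Fin (d+1) → ℝ) (hφ : ContDiff ℝ (⊤ : ℕ∞) φ)
    (hchart : ∀ x, 0 < φ x (Fin.last d) ∧ φ x (Fin.last d) < Real.pi)
    (k : ℕ) (hk : 3 ≤ k)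
    (D : Set (Fin m → ℝ)) (hDopen : IsOpen D) (hDcpt : IsCompact (closure D))
    (hDsub : closure D ⊆ U) :
    ∃ C > 0, ∀ x ∈ D,
      (|lap P (fun z => φ z (Fin.last d) - Real.pi / 2) x|
          ≤ C * (|φ x (Fin.last d) - Real.pi / 2| + |uvar P φ 0 x (Fin.last d)|))
      ∧ (vnorm (fun i : Fin m =>
            lap P (fun z => pd i (fun w => φ w (Fin.last d) - Real.pi / 2) z) x)
          ≤ C * (|φ x (Fin.last d) - Real.pi / 2|
            + vnorm (fun i : Fin m => pd i (fun w => φ w (Fin.last d) - Real.pi / 2) x)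
            + vnorm (fun p : Fin m × Fin m × Fin (d+1) => sff P φ x p.1 p.2.1 p.2.2)
            + vnorm (fun i : Fin m => vvar P φ 0 x i (Fin.last d))))
      ∧ ∀ j ≤ k - 3,
          |Asec P φ (uvar P φ j) x (Fin.last d)|
            ≤ C * (|φ x (Fin.last d) - Real.pi / 2|
              + vnorm (fun i : Fin m => pd i (fun w => φ w (Fin.last d) - Real.pi / 2) x)) := by
  -- notation
  set L : Fin (d+1) := Fin.last d with hL
  -- the small quantities
  set f : (Fin m → ℝ) → ℝ := fun x => φ x L - Real.pi / 2 with hf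
  set ndf : (Fin m → ℝ) → ℝ := fun x => vnorm (fun i : Fin m => pd i (fun w => φ w L - Real.pi / 2) x) with hndf
  set nsff : (Fin m → ℝ) → ℝ := fun x => vnorm (fun p : Fin m × Fin m × Fin (d+1) => sff P φ x p.1 p.2.1 p.2.2) with hnsff
  set nv0 : (Fin m → ℝ) → ℝ := fun x => vnorm (fun i : Fin m => vvar P φ 0 x i L) with hnv0
  have hndf0 : ∀ x, 0 ≤ ndf x := fun x => vnorm_nonneg _
  have hnsff0 : ∀ x, 0 ≤ nsff x := fun x => vnorm_nonneg _
  have hnv00 : ∀ x, 0 ≤ nv0 x := fun x => vnorm_nonneg _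
  -- basic facts
  have hGlast : ∀ β γ : Fin (d+1), (fun y => P.ΓN y L β γ) = Gl gt β γ := fun β γ => by
    rw [hΓN]; exact sphereΓ_last_eq β γ
  have hB1 : ∀ x (β γ : Fin (d+1)), |P.ΓN (φ x) L β γ| ≤ |f x| * Gs gt (φ x) := by
    intro x β γ
    rw [congrFun (hGlast β γ) (φ x)]
    exact Gl_bound β γ (φ x)
  -- continuity helpers
  have hGscont : Continuous (fun x => Gs gt (φ x)) := by
    refine continuous_finset_sum _ fun a _ => continuous_finset_sum _ fun b _ => ?_
    exact ((hgt a b).continuous.comp ((restr d).continuous.comp hφ.continuous)).abs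
  have hginvc : ∀ i j, Continuous (fun x => P.ginv x i j) := fun i j => (hPdom.1 i j).continuous
  have hdphic : ∀ i β, Continuous (fun x => dphi φ x i β) := fun i β =>
    (contDiff_dphi hφ i β).continuous
  -- Part (i)
  have key1 : ∃ A : (Fin m → ℝ) → ℝ, Continuous A ∧ ∀ x, 0 ≤ A x ∧
      |lap P (fun z => φ z L - Real.pi / 2) x| ≤ A x * (|f x| + |uvar P φ 0 x L|) := by
    refine ⟨fun x => 1 + ∑ i, ∑ j, ∑ ϑ, ∑ β,
      |P.ginv x i j| * Gs gt (φ x) * |dphi φ x i ϑ| * |dphi φ x j β|, ?_, ?_⟩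
    · refine continuous_const.add ?_
      refine continuous_finset_sum _ fun i _ => continuous_finset_sum _ fun j _ =>
        continuous_finset_sum _ fun ϑ _ => continuous_finset_sum _ fun β _ => ?_
      exact (((hginvc i j).abs.mul hGscont).mul (hdphic i ϑ).abs).mul (hdphic j β).abs
    · intro x
      have hA0 : 0 ≤ ∑ i, ∑ j, ∑ ϑ, ∑ β,
          |P.ginv x i j| * Gs gt (φ x) * |dphi φ x i ϑ| * |dphi φ x j β| := by
        refine Finset.sum_nonneg fun i _ => Finset.sum_nonneg fun j _ =>
          Finset.sum_nonneg fun ϑ _ => Finset.sum_nonneg fun β _ => ?_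
        have := Gs_nonneg (gt := gt) (φ x)
        positivity
      constructor
      · positivity
      -- identity: lap of f = lap of φ^L
      have hpdf : ∀ i : Fin m, (pd i fun w => φ w L - Real.pi/2) = (pd i fun w => φ w L) :=
        fun i => funext fun z => pd_sub_const i z _
      have hlapeq : lap P (fun z => φ z L - Real.pi / 2) x = lap P (fun z => φ z L) x := by
        unfold lap
        simp only [hpdf]
      rw [hlapeq]
      -- identity with the tension field
      have hu0 : uvar P φ 0 x L = -(lap P (fun z => φ z L) x)
          + ∑ i, ∑ j, ∑ ϑ, ∑ β,
              P.ginv x i j * P.ΓN (φ x) L ϑ β * dphi φ x i ϑ * dphi φ x j β := rfl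
      have hlapT : lap P (fun z => φ z L) x
          = (∑ i, ∑ j, ∑ ϑ, ∑ β,
              P.ginv x i j * P.ΓN (φ x) L ϑ β * dphi φ x i ϑ * dphi φ x j β)
            - uvar P φ 0 x L := by rw [hu0]; ring
      rw [hlapT]
      have hT : |∑ i, ∑ j, ∑ ϑ, ∑ β,
          P.ginv x i j * P.ΓN (φ x) L ϑ β * dphi φ x i ϑ * dphi φ x j β|
          ≤ |f x| * ∑ i, ∑ j, ∑ ϑ, ∑ β,
              |P.ginv x i j| * Gs gt (φ x) * |dphi φ x i ϑ| * |dphi φ x j β| := by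
        simp only [Finset.mul_sum]
        refine abs_sum_le' _ _ _ fun i _ => abs_sum_le' _ _ _ fun j _ =>
          abs_sum_le' _ _ _ fun ϑ _ => abs_sum_le' _ _ _ fun β _ => ?_
        rw [abs_mul, abs_mul, abs_mul]
        calc |P.ginv x i j| * |P.ΓN (φ x) L ϑ β| * |dphi φ x i ϑ| * |dphi φ x j β|
            ≤ |P.ginv x i j| * (|f x| * Gs gt (φ x)) * |dphi φ x i ϑ| * |dphi φ x j β| := by
              gcongr
              exact hB1 x ϑ β
          _ = |f x| * (|P.ginv x i j| * Gs gt (φ x) * |dphi φ x i ϑ| * |dphi φ x j β|) := by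
              ring
      calc |(∑ i, ∑ j, ∑ ϑ, ∑ β,
              P.ginv x i j * P.ΓN (φ x) L ϑ β * dphi φ x i ϑ * dphi φ x j β)
            - uvar P φ 0 x L|
          ≤ |∑ i, ∑ j, ∑ ϑ, ∑ β,
              P.ginv x i j * P.ΓN (φ x) L ϑ β * dphi φ x i ϑ * dphi φ x j β|
            + |uvar P φ 0 x L| := abs_sub _ _
        _ ≤ |f x| * (∑ i, ∑ j, ∑ ϑ, ∑ β,
              |P.ginv x i j| * Gs gt (φ x) * |dphi φ x i ϑ| * |dphi φ x j β|)
            + |uvar P φ 0 x L| := by linarith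
        _ ≤ (1 + ∑ i, ∑ j, ∑ ϑ, ∑ β,
              |P.ginv x i j| * Gs gt (φ x) * |dphi φ x i ϑ| * |dphi φ x j β|)
            * (|f x| + |uvar P φ 0 x L|) := by
            have h1 := abs_nonneg (f x)
            have h2 := abs_nonneg (uvar P φ 0 x L)
            nlinarith
  -- additional bounds for part (iii)
  have hfx2 : ∀ x, |f x| ≤ 2 := by
    intro x
    obtain ⟨h1, h2⟩ := hchart x
    have hpi := Real.pi_le_four
    have : |φ x L - Real.pi / 2| ≤ Real.pi / 2 := by
      rw [abs_le]; constructor <;> [linarith; linarith]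
    simp only [hf]
    linarith
  have hB2 : ∀ (x : Fin m → ℝ) (β γ ω : Fin (d+1)), ω ≠ L →
      |pd ω (fun y => P.ΓN y L β γ) (φ x)| ≤ |f x| * DGs gt (φ x) := by
    intro x β γ ω hω
    rw [hGlast β γ]
    obtain ⟨c, rfl⟩ := Fin.exists_castSucc_eq.mpr hω
    exact pd_Gl_castSucc_bound hgt c β γ (φ x)
  have hB3 : ∀ (x : Fin m → ℝ) (β γ : Fin (d+1)),
      |pd L (fun y => P.ΓN y L β γ) (φ x)| ≤ Gs gt (φ x) := by
    intro x β γ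
    rw [hGlast β γ]
    exact pd_Gl_last_bound hgt β γ (φ x)
  -- aggregate coefficient functions
  set Φ : (Fin m → ℝ) → ℝ := fun x => ∑ i, ∑ β, |dphi φ x i β| with hΦdef
  set ΓA : (Fin m → ℝ) → ℝ := fun x =>
    Gs gt (φ x) * ∑ γ, ∑ β, ∑ ϑ, |P.ΓN (φ x) γ β ϑ| with hΓAdef
  set SBB : (Fin m → ℝ) → ℝ := fun x =>
    2 * (Gs gt (φ x) + DGs gt (φ x) + ΓA x) with hSBBdef
  have hΦ0 : ∀ x, 0 ≤ Φ x := fun x =>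
    Finset.sum_nonneg fun _ _ => Finset.sum_nonneg fun _ _ => abs_nonneg _
  have hΓA0 : ∀ x, 0 ≤ ΓA x := fun x =>
    mul_nonneg (Gs_nonneg _) (Finset.sum_nonneg fun _ _ => Finset.sum_nonneg fun _ _ =>
      Finset.sum_nonneg fun _ _ => abs_nonneg _)
  have hSBB0 : ∀ x, 0 ≤ SBB x := fun x => by
    have := Gs_nonneg (gt := gt) (φ x); have := DGs_nonneg (gt := gt) (φ x)
    have := hΓA0 x; positivity
  have hdphiΦ : ∀ x i β, |dphi φ x i β| ≤ Φ x := by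
    intro x i β
    calc |dphi φ x i β| ≤ ∑ β', |dphi φ x i β'| :=
          Finset.single_le_sum (f := fun β' => |dphi φ x i β'|)
            (fun _ _ => abs_nonneg _) (Finset.mem_univ β)
      _ ≤ Φ x := Finset.single_le_sum (f := fun i' => ∑ β', |dphi φ x i' β'|)
            (fun _ _ => Finset.sum_nonneg fun _ _ => abs_nonneg _) (Finset.mem_univ i)
  have hdphiL : ∀ x i, |dphi φ x i L| ≤ ndf x := by
    intro x i
    have h1 := abs_le_vnorm (fun i : Fin m => pd i (fun w => φ w L - Real.pi / 2) x) i
    rw [pd_sub_const] at h1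
    exact h1
  have hΓsum : ∀ x (β' ϑ' : Fin (d+1)),
      ∑ γ, |P.ΓN (φ x) γ β' ϑ'| ≤ ∑ γ, ∑ β, ∑ ϑ, |P.ΓN (φ x) γ β ϑ| := by
    intro x β' ϑ'
    refine Finset.sum_le_sum fun γ _ => ?_
    calc |P.ΓN (φ x) γ β' ϑ'| ≤ ∑ ϑ, |P.ΓN (φ x) γ β' ϑ| :=
          Finset.single_le_sum (f := fun ϑ => |P.ΓN (φ x) γ β' ϑ|)
            (fun _ _ => abs_nonneg _) (Finset.mem_univ ϑ')
      _ ≤ ∑ β, ∑ ϑ, |P.ΓN (φ x) γ β ϑ| :=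
          Finset.single_le_sum (f := fun β => ∑ ϑ, |P.ΓN (φ x) γ β ϑ|)
            (fun _ _ => Finset.sum_nonneg fun _ _ => abs_nonneg _) (Finset.mem_univ β')
  -- bounds on Scoef
  have hScoef_eq : ∀ x (β ω ϑ : Fin (d+1)), Scoef P (φ x) L β ω ϑ =
      (pd ω (fun z => P.ΓN z L β ϑ) (φ x) + (∑ γ, P.ΓN (φ x) γ β ϑ * P.ΓN (φ x) L ω γ)
        + pd β (fun z => P.ΓN z L ω ϑ) (φ x)
        + ∑ γ, P.ΓN (φ x) γ ω ϑ * P.ΓN (φ x) L β γ) / 2 := fun x β ω ϑ => rfl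
  have hP24 : ∀ x (β ϑ : Fin (d+1)) (ω : Fin (d+1)),
      |∑ γ, P.ΓN (φ x) γ β ϑ * P.ΓN (φ x) L ω γ| ≤ |f x| * ΓA x := by
    intro x β ϑ ω
    have step : |∑ γ, P.ΓN (φ x) γ β ϑ * P.ΓN (φ x) L ω γ|
        ≤ ∑ γ, |P.ΓN (φ x) γ β ϑ| * (|f x| * Gs gt (φ x)) := by
      refine abs_sum_le' _ _ _ fun γ _ => ?_
      rw [abs_mul]
      exact mul_le_mul_of_nonneg_left (hB1 x ω γ) (abs_nonneg _)
    refine step.trans ?_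
    rw [← Finset.sum_mul]
    calc (∑ γ, |P.ΓN (φ x) γ β ϑ|) * (|f x| * Gs gt (φ x))
        ≤ (∑ γ, ∑ β', ∑ ϑ', |P.ΓN (φ x) γ β' ϑ'|) * (|f x| * Gs gt (φ x)) :=
          mul_le_mul_of_nonneg_right (hΓsum x β ϑ)
            (mul_nonneg (abs_nonneg _) (Gs_nonneg _))
      _ = |f x| * ΓA x := by rw [hΓAdef]; ring
  have hSB1 : ∀ x (β ω ϑ : Fin (d+1)), |Scoef P (φ x) L β ω ϑ| ≤ SBB x := by
    intro x β ω ϑ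
    rw [hScoef_eq]
    have hG0 := Gs_nonneg (gt := gt) (φ x)
    have hD0 := DGs_nonneg (gt := gt) (φ x)
    have hA0 := hΓA0 x
    have hf0 := abs_nonneg (f x)
    have hf2 := hfx2 x
    have h2 := hP24 x β ϑ ω
    have h4 := hP24 x ω ϑ β
    have h1 : |pd ω (fun z => P.ΓN z L β ϑ) (φ x)| ≤ Gs gt (φ x) + 2 * DGs gt (φ x) := by
      by_cases hω : ω = L
      · subst hω; have := hB3 x β ϑ; linarith
      · have := hB2 x β ϑ ω hω
        have hDb : |f x| * DGs gt (φ x) ≤ 2 * DGs gt (φ x) := by nlinarith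
        linarith
    have h3 : |pd β (fun z => P.ΓN z L ω ϑ) (φ x)| ≤ Gs gt (φ x) + 2 * DGs gt (φ x) := by
      by_cases hβ : β = L
      · subst hβ; have := hB3 x ω ϑ; linarith
      · have := hB2 x ω ϑ β hβ
        have hDb : |f x| * DGs gt (φ x) ≤ 2 * DGs gt (φ x) := by nlinarith
        linarith
    have habs : |(pd ω (fun z => P.ΓN z L β ϑ) (φ x)
        + (∑ γ, P.ΓN (φ x) γ β ϑ * P.ΓN (φ x) L ω γ)
        + pd β (fun z => P.ΓN z L ω ϑ) (φ x)
        + ∑ γ, P.ΓN (φ x) γ ω ϑ * P.ΓN (φ x) L β γ)|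
        ≤ |pd ω (fun z => P.ΓN z L β ϑ) (φ x)|
          + |∑ γ, P.ΓN (φ x) γ β ϑ * P.ΓN (φ x) L ω γ|
          + |pd β (fun z => P.ΓN z L ω ϑ) (φ x)|
          + |∑ γ, P.ΓN (φ x) γ ω ϑ * P.ΓN (φ x) L β γ| := by
      calc _ ≤ |pd ω (fun z => P.ΓN z L β ϑ) (φ x)
            + (∑ γ, P.ΓN (φ x) γ β ϑ * P.ΓN (φ x) L ω γ)
            + pd β (fun z => P.ΓN z L ω ϑ) (φ x)|
          + |∑ γ, P.ΓN (φ x) γ ω ϑ * P.ΓN (φ x) L β γ| := abs_add_le _ _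
        _ ≤ _ := by
          have hh := abs_add_le (pd ω (fun z => P.ΓN z L β ϑ) (φ x)
            + (∑ γ, P.ΓN (φ x) γ β ϑ * P.ΓN (φ x) L ω γ))
            (pd β (fun z => P.ΓN z L ω ϑ) (φ x))
          have hh2 := abs_add_le (pd ω (fun z => P.ΓN z L β ϑ) (φ x))
            (∑ γ, P.ΓN (φ x) γ β ϑ * P.ΓN (φ x) L ω γ)
          linarith
    rw [abs_div, abs_two]
    have hfΓ : |f x| * ΓA x ≤ 2 * ΓA x := by nlinarith
    rw [hSBBdef]
    linarith
  have hSB2 : ∀ x (β ω ϑ : Fin (d+1)), ω ≠ L → β ≠ L →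
      |Scoef P (φ x) L β ω ϑ| ≤ |f x| * SBB x := by
    intro x β ω ϑ hω hβ
    rw [hScoef_eq]
    have hG0 := Gs_nonneg (gt := gt) (φ x)
    have hD0 := DGs_nonneg (gt := gt) (φ x)
    have hA0 := hΓA0 x
    have hf0 := abs_nonneg (f x)
    have h1 := hB2 x β ϑ ω hω
    have h3 := hB2 x ω ϑ β hβ
    have h2 := hP24 x β ϑ ω
    have h4 := hP24 x ω ϑ β
    have habs : |(pd ω (fun z => P.ΓN z L β ϑ) (φ x)
        + (∑ γ, P.ΓN (φ x) γ β ϑ * P.ΓN (φ x) L ω γ)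
        + pd β (fun z => P.ΓN z L ω ϑ) (φ x)
        + ∑ γ, P.ΓN (φ x) γ ω ϑ * P.ΓN (φ x) L β γ)|
        ≤ |pd ω (fun z => P.ΓN z L β ϑ) (φ x)|
          + |∑ γ, P.ΓN (φ x) γ β ϑ * P.ΓN (φ x) L ω γ|
          + |pd β (fun z => P.ΓN z L ω ϑ) (φ x)|
          + |∑ γ, P.ΓN (φ x) γ ω ϑ * P.ΓN (φ x) L β γ| := by
      calc _ ≤ |pd ω (fun z => P.ΓN z L β ϑ) (φ x)
            + (∑ γ, P.ΓN (φ x) γ β ϑ * P.ΓN (φ x) L ω γ)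
            + pd β (fun z => P.ΓN z L ω ϑ) (φ x)|
          + |∑ γ, P.ΓN (φ x) γ ω ϑ * P.ΓN (φ x) L β γ| := abs_add_le _ _
        _ ≤ _ := by
          have hh := abs_add_le (pd ω (fun z => P.ΓN z L β ϑ) (φ x)
            + (∑ γ, P.ΓN (φ x) γ β ϑ * P.ΓN (φ x) L ω γ))
            (pd β (fun z => P.ΓN z L ω ϑ) (φ x))
          have hh2 := abs_add_le (pd ω (fun z => P.ΓN z L β ϑ) (φ x))
            (∑ γ, P.ΓN (φ x) γ β ϑ * P.ΓN (φ x) L ω γ)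
          linarith
    rw [abs_div, abs_two]
    rw [hSBBdef]
    nlinarith
  -- the structural claim for the S-term
  have Sclaim : ∀ x (i j : Fin m) (β ω ϑ : Fin (d+1)),
      |dphi φ x j β * dphi φ x i ω * Scoef P (φ x) L β ω ϑ|
        ≤ ((1 + Φ x) * (1 + Φ x) * SBB x) * (|f x| + ndf x) := by
    intro x i j β ω ϑ
    have hΦx := hΦ0 x
    have hSx := hSBB0 x
    have hfx := abs_nonneg (f x)
    have hnx := hndf0 x
    have h1Φ : (1:ℝ) ≤ 1 + Φ x := by linarith
    rw [abs_mul, abs_mul]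
    by_cases hω : ω = L
    · subst hω
      have ha := (hdphiΦ x j β).trans (by linarith : Φ x ≤ 1 + Φ x)
      calc |dphi φ x j β| * |dphi φ x i L| * |Scoef P (φ x) L β L ϑ|
          ≤ (1 + Φ x) * ndf x * SBB x :=
            mul3_le ha (hdphiL x i) (hSB1 x β L ϑ) (by linarith) hnx
        _ ≤ (1 + Φ x) * (1 + Φ x) * SBB x * (|f x| + ndf x) :=
            aux_cq h1Φ hSx hfx hnx
    · by_cases hβ : β = L
      · subst hβ
        calc |dphi φ x j L| * |dphi φ x i ω| * |Scoef P (φ x) L L ω ϑ|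
            ≤ ndf x * (1 + Φ x) * SBB x :=
              mul3_le (hdphiL x j) ((hdphiΦ x i ω).trans (by linarith))
                (hSB1 x L ω ϑ) hnx (by linarith)
          _ = (1 + Φ x) * ndf x * SBB x := by ring
          _ ≤ (1 + Φ x) * (1 + Φ x) * SBB x * (|f x| + ndf x) :=
              aux_cq h1Φ hSx hfx hnx
      · calc |dphi φ x j β| * |dphi φ x i ω| * |Scoef P (φ x) L β ω ϑ|
            ≤ (1 + Φ x) * (1 + Φ x) * (|f x| * SBB x) :=
              mul3_le ((hdphiΦ x j β).trans (by linarith))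
                ((hdphiΦ x i ω).trans (by linarith))
                (hSB2 x β ω ϑ hω hβ) (by linarith) (by linarith)
          _ ≤ (1 + Φ x) * (1 + Φ x) * SBB x * (|f x| + ndf x) := by
              nlinarith [mul_nonneg (mul_nonneg (mul_nonneg
                (le_trans zero_le_one h1Φ) (le_trans zero_le_one h1Φ)) hSx) hnx]
  have hu : ∀ j α, ContDiff ℝ (⊤:ℕ∞) (fun x => uvar P φ j x α) :=
    contDiff_uvar hΓN hgt hΓt hφ hchart hPdom
  have hDGscont : Continuous (fun x => DGs gt (φ x)) := by
    refine continuous_finset_sum _ fun c _ => continuous_finset_sum _ fun a _ =>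
      continuous_finset_sum _ fun b _ => ?_
    exact ((contDiff_pd c (hgt a b)).continuous.comp
      ((restr d).continuous.comp hφ.continuous)).abs
  have hΦcont : Continuous Φ :=
    continuous_finset_sum _ fun i _ => continuous_finset_sum _ fun β _ => (hdphic i β).abs
  have hSBBcont : Continuous SBB := by
    rw [hSBBdef]
    refine continuous_const.mul ((hGscont.add hDGscont).add ?_)
    rw [hΓAdef]
    refine hGscont.mul ?_
    refine continuous_finset_sum _ fun γ _ => continuous_finset_sum _ fun β _ =>
      continuous_finset_sum _ fun ϑ _ => ?_
    exact (contDiff_ΓN_comp hΓN hgt hΓt hφ hchart γ β ϑ).continuous.abs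
  have key3 : ∃ A : (Fin m → ℝ) → ℝ, Continuous A ∧ ∀ x, 0 ≤ A x ∧
      ∀ j ≤ k - 3, |Asec P φ (uvar P φ j) x L| ≤ A x * (|f x| + ndf x) := by
    have hCA0 : ∀ jj (x : Fin m → ℝ), 0 ≤ ∑ ϑ, ∑ i, |pd i (fun z => uvar P φ jj z ϑ) x|
        * (2 * ∑ l, ∑ β, |P.ginv x i l| * |dphi φ x l β| * Gs gt (φ x)) := by
      intro jj x
      have hGnn := Gs_nonneg (gt := gt) (φ x)
      refine Finset.sum_nonneg fun ϑ _ => Finset.sum_nonneg fun i _ => ?_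
      have h1 : (0:ℝ) ≤ ∑ l, ∑ β, |P.ginv x i l| * |dphi φ x l β| * Gs gt (φ x) :=
        Finset.sum_nonneg fun l _ => Finset.sum_nonneg fun β _ =>
          mul_nonneg (mul_nonneg (abs_nonneg _) (abs_nonneg _)) hGnn
      exact mul_nonneg (abs_nonneg _) (mul_nonneg (by norm_num) h1)
    have hCB0 : ∀ jj (x : Fin m → ℝ), 0 ≤ ∑ ϑ, |uvar P φ jj x ϑ|
        * ((∑ β, |lap P (fun z => φ z β) x| * Gs gt (φ x))
          + ∑ i, ∑ l, ∑ _β : Fin (d+1), ∑ _ω : Fin (d+1),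
              |P.ginv x i l| * ((1 + Φ x) * (1 + Φ x) * SBB x)) := by
      intro jj x
      have hg := Gs_nonneg (gt := gt) (φ x)
      have hs := hSBB0 x
      have hp := hΦ0 x
      refine Finset.sum_nonneg fun ϑ _ => ?_
      have h1 : (0:ℝ) ≤ ∑ β, |lap P (fun z => φ z β) x| * Gs gt (φ x) :=
        Finset.sum_nonneg fun β _ => by positivity
      have h2 : (0:ℝ) ≤ ∑ i, ∑ l, ∑ _β : Fin (d+1), ∑ _ω : Fin (d+1),
          |P.ginv x i l| * ((1 + Φ x) * (1 + Φ x) * SBB x) :=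
        Finset.sum_nonneg fun i _ => Finset.sum_nonneg fun l _ =>
          Finset.sum_nonneg fun β _ => Finset.sum_nonneg fun ω _ => by positivity
      positivity
    have hAjb : ∀ jj (x : Fin m → ℝ), |Asec P φ (uvar P φ jj) x L|
        ≤ ((∑ ϑ, ∑ i, |pd i (fun z => uvar P φ jj z ϑ) x|
            * (2 * ∑ l, ∑ β, |P.ginv x i l| * |dphi φ x l β| * Gs gt (φ x)))
          + ∑ ϑ, |uvar P φ jj x ϑ|
            * ((∑ β, |lap P (fun z => φ z β) x| * Gs gt (φ x))
              + ∑ i, ∑ l, ∑ _β : Fin (d+1), ∑ _ω : Fin (d+1),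
                  |P.ginv x i l| * ((1 + Φ x) * (1 + Φ x) * SBB x)))
          * (|f x| + ndf x) := by
      intro jj x
      have hfx := abs_nonneg (f x)
      have hnx := hndf0 x
      have hGx := Gs_nonneg (gt := gt) (φ x)
      have hasec : Asec P φ (uvar P φ jj) x L =
          (∑ ϑ, ∑ i, pd i (fun z => uvar P φ jj z ϑ) x
              * (-2 * ∑ l, ∑ β, P.ginv x i l * dphi φ x l β * P.ΓN (φ x) L β ϑ))
          + ∑ ϑ, uvar P φ jj x ϑ
              * ((∑ β, lap P (fun z => φ z β) x * P.ΓN (φ x) L β ϑ)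
                - ∑ i, ∑ l, ∑ β, ∑ ω,
                    P.ginv x i l * dphi φ x l β * dphi φ x i ω
                      * Scoef P (φ x) L β ω ϑ) := rfl
      rw [hasec]
      have hT1 : |∑ ϑ, ∑ i, pd i (fun z => uvar P φ jj z ϑ) x
            * (-2 * ∑ l, ∑ β, P.ginv x i l * dphi φ x l β * P.ΓN (φ x) L β ϑ)|
          ≤ |f x| * ∑ ϑ, ∑ i, |pd i (fun z => uvar P φ jj z ϑ) x|
              * (2 * ∑ l, ∑ β, |P.ginv x i l| * |dphi φ x l β| * Gs gt (φ x)) := by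
        simp only [Finset.mul_sum]
        refine abs_sum_le' _ _ _ fun ϑ _ => abs_sum_le' _ _ _ fun i _ =>
          abs_sum_le' _ _ _ fun l _ => abs_sum_le' _ _ _ fun β _ => ?_
        rw [abs_mul, abs_mul, abs_neg, abs_two, abs_mul, abs_mul]
        have h2 : |P.ginv x i l| * |dphi φ x l β| * |P.ΓN (φ x) L β ϑ|
            ≤ |P.ginv x i l| * |dphi φ x l β| * (|f x| * Gs gt (φ x)) :=
          mul_le_mul_of_nonneg_left (hB1 x β ϑ)
            (mul_nonneg (abs_nonneg _) (abs_nonneg _))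
        calc |pd i (fun z => uvar P φ jj z ϑ) x|
              * (2 * (|P.ginv x i l| * |dphi φ x l β| * |P.ΓN (φ x) L β ϑ|))
            ≤ |pd i (fun z => uvar P φ jj z ϑ) x|
              * (2 * (|P.ginv x i l| * |dphi φ x l β| * (|f x| * Gs gt (φ x)))) :=
              mul_le_mul_of_nonneg_left (by linarith) (abs_nonneg _)
          _ = |f x| * (|pd i (fun z => uvar P φ jj z ϑ) x|
              * (2 * (|P.ginv x i l| * |dphi φ x l β| * Gs gt (φ x)))) := by ring
      have hT2 : |∑ ϑ, uvar P φ jj x ϑ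
            * ((∑ β, lap P (fun z => φ z β) x * P.ΓN (φ x) L β ϑ)
              - ∑ i, ∑ l, ∑ β, ∑ ω,
                  P.ginv x i l * dphi φ x l β * dphi φ x i ω * Scoef P (φ x) L β ω ϑ)|
          ≤ (|f x| + ndf x) * ∑ ϑ, |uvar P φ jj x ϑ|
              * ((∑ β, |lap P (fun z => φ z β) x| * Gs gt (φ x))
                + ∑ i, ∑ l, ∑ _β : Fin (d+1), ∑ _ω : Fin (d+1),
                    |P.ginv x i l| * ((1 + Φ x) * (1 + Φ x) * SBB x)) := by
        simp only [Finset.mul_sum]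
        refine abs_sum_le' _ _ _ fun ϑ _ => ?_
        rw [abs_mul]
        have hE1 : |∑ β, lap P (fun z => φ z β) x * P.ΓN (φ x) L β ϑ|
            ≤ |f x| * ∑ β, |lap P (fun z => φ z β) x| * Gs gt (φ x) := by
          simp only [Finset.mul_sum]
          refine abs_sum_le' _ _ _ fun β _ => ?_
          rw [abs_mul]
          calc |lap P (fun z => φ z β) x| * |P.ΓN (φ x) L β ϑ|
              ≤ |lap P (fun z => φ z β) x| * (|f x| * Gs gt (φ x)) := by
                gcongr
                exact hB1 x β ϑ
            _ = |f x| * (|lap P (fun z => φ z β) x| * Gs gt (φ x)) := by ring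
        have hE2 : |∑ i, ∑ l, ∑ β, ∑ ω,
              P.ginv x i l * dphi φ x l β * dphi φ x i ω * Scoef P (φ x) L β ω ϑ|
            ≤ (|f x| + ndf x) * ∑ i, ∑ l, ∑ _β : Fin (d+1), ∑ _ω : Fin (d+1),
                |P.ginv x i l| * ((1 + Φ x) * (1 + Φ x) * SBB x) := by
          simp only [Finset.mul_sum]
          refine abs_sum_le' _ _ _ fun i _ => abs_sum_le' _ _ _ fun l _ =>
            abs_sum_le' _ _ _ fun β _ => abs_sum_le' _ _ _ fun ω _ => ?_
          rw [show P.ginv x i l * dphi φ x l β * dphi φ x i ω * Scoef P (φ x) L β ω ϑ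
              = P.ginv x i l * (dphi φ x l β * dphi φ x i ω * Scoef P (φ x) L β ω ϑ) by ring,
            abs_mul]
          calc |P.ginv x i l| * |dphi φ x l β * dphi φ x i ω * Scoef P (φ x) L β ω ϑ|
              ≤ |P.ginv x i l| * (((1 + Φ x) * (1 + Φ x) * SBB x) * (|f x| + ndf x)) := by
                gcongr
                exact Sclaim x i l β ω ϑ
            _ = (|f x| + ndf x) * (|P.ginv x i l| * ((1 + Φ x) * (1 + Φ x) * SBB x)) := by
                ring
        have hE10 : (0:ℝ) ≤ ∑ β, |lap P (fun z => φ z β) x| * Gs gt (φ x) :=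
          Finset.sum_nonneg fun β _ => by positivity
        have hE20 : (0:ℝ) ≤ ∑ i, ∑ l, ∑ _β : Fin (d+1), ∑ _ω : Fin (d+1),
            |P.ginv x i l| * ((1 + Φ x) * (1 + Φ x) * SBB x) := by
          have hs := hSBB0 x
          have hp := hΦ0 x
          exact Finset.sum_nonneg fun i _ => Finset.sum_nonneg fun l _ =>
            Finset.sum_nonneg fun β _ => Finset.sum_nonneg fun ω _ => by positivity
        have habs := abs_sub (∑ β, lap P (fun z => φ z β) x * P.ΓN (φ x) L β ϑ)
          (∑ i, ∑ l, ∑ β, ∑ ω,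
            P.ginv x i l * dphi φ x l β * dphi φ x i ω * Scoef P (φ x) L β ω ϑ)
        calc |uvar P φ jj x ϑ| * |(∑ β, lap P (fun z => φ z β) x * P.ΓN (φ x) L β ϑ)
              - ∑ i, ∑ l, ∑ β, ∑ ω,
                  P.ginv x i l * dphi φ x l β * dphi φ x i ω * Scoef P (φ x) L β ω ϑ|
            ≤ |uvar P φ jj x ϑ| * ((|f x| + ndf x)
              * ((∑ β, |lap P (fun z => φ z β) x| * Gs gt (φ x))
                + ∑ i, ∑ l, ∑ _β : Fin (d+1), ∑ _ω : Fin (d+1),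
                    |P.ginv x i l| * ((1 + Φ x) * (1 + Φ x) * SBB x))) := by
              refine mul_le_mul_of_nonneg_left ?_ (abs_nonneg _)
              nlinarith [mul_nonneg hnx hE10]
          _ = (|f x| + ndf x) * (|uvar P φ jj x ϑ|
              * ((∑ β, |lap P (fun z => φ z β) x| * Gs gt (φ x))
                + ∑ i, ∑ l, ∑ _β : Fin (d+1), ∑ _ω : Fin (d+1),
                    |P.ginv x i l| * ((1 + Φ x) * (1 + Φ x) * SBB x))) := by ring
      have habs2 := abs_add_le
        (∑ ϑ, ∑ i, pd i (fun z => uvar P φ jj z ϑ) x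
          * (-2 * ∑ l, ∑ β, P.ginv x i l * dphi φ x l β * P.ΓN (φ x) L β ϑ))
        (∑ ϑ, uvar P φ jj x ϑ
          * ((∑ β, lap P (fun z => φ z β) x * P.ΓN (φ x) L β ϑ)
            - ∑ i, ∑ l, ∑ β, ∑ ω,
                P.ginv x i l * dphi φ x l β * dphi φ x i ω * Scoef P (φ x) L β ω ϑ))
      have hca := hCA0 jj x
      nlinarith [mul_nonneg hnx (hCA0 jj x)]
    refine ⟨fun x => ∑ jj ∈ Finset.range (k-2),
        ((∑ ϑ, ∑ i, |pd i (fun z => uvar P φ jj z ϑ) x|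
          * (2 * ∑ l, ∑ β, |P.ginv x i l| * |dphi φ x l β| * Gs gt (φ x)))
        + ∑ ϑ, |uvar P φ jj x ϑ|
          * ((∑ β, |lap P (fun z => φ z β) x| * Gs gt (φ x))
            + ∑ i, ∑ l, ∑ _β : Fin (d+1), ∑ _ω : Fin (d+1),
                |P.ginv x i l| * ((1 + Φ x) * (1 + Φ x) * SBB x))), ?_, ?_⟩
    · refine continuous_finset_sum _ fun jj _ => Continuous.add ?_ ?_
      · refine continuous_finset_sum _ fun ϑ _ => continuous_finset_sum _ fun i _ => ?_
        refine ((contDiff_pd i (hu jj ϑ)).continuous.abs).mul (continuous_const.mul ?_)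
        refine continuous_finset_sum _ fun l _ => continuous_finset_sum _ fun β _ => ?_
        exact ((hginvc i l).abs.mul (hdphic l β).abs).mul hGscont
      · refine continuous_finset_sum _ fun ϑ _ => ((hu jj ϑ).continuous.abs).mul
          (Continuous.add ?_ ?_)
        · exact continuous_finset_sum _ fun β _ =>
            ((contDiff_lap hPdom (contDiff_proj_comp hφ β)).continuous.abs).mul hGscont
        · refine continuous_finset_sum _ fun i _ => continuous_finset_sum _ fun l _ =>
            continuous_finset_sum _ fun β _ => continuous_finset_sum _ fun ω _ => ?_
          exact (hginvc i l).abs.mul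
            (((continuous_const.add hΦcont).mul (continuous_const.add hΦcont)).mul hSBBcont)
    · intro x
      constructor
      · exact Finset.sum_nonneg fun jj _ => add_nonneg (hCA0 jj x) (hCB0 jj x)
      · intro j hj
        refine (hAjb j x).trans (mul_le_mul_of_nonneg_right ?_
          (add_nonneg (abs_nonneg _) (hndf0 x)))
        refine Finset.single_le_sum
          (f := fun jj => (∑ ϑ, ∑ i, |pd i (fun z => uvar P φ jj z ϑ) x|
            * (2 * ∑ l, ∑ β, |P.ginv x i l| * |dphi φ x l β| * Gs gt (φ x)))
          + ∑ ϑ, |uvar P φ jj x ϑ|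
            * ((∑ β, |lap P (fun z => φ z β) x| * Gs gt (φ x))
              + ∑ i, ∑ l, ∑ _β : Fin (d+1), ∑ _ω : Fin (d+1),
                  |P.ginv x i l| * ((1 + Φ x) * (1 + Φ x) * SBB x)))
          (fun jj _ => add_nonneg (hCA0 jj x) (hCB0 jj x))
          (Finset.mem_range.mpr (by omega))
  -- Part (ii)
  have hΓNφdiff : ∀ ϑ β, ContDiff ℝ (⊤:ℕ∞) (fun z => P.ΓN (φ z) L ϑ β) :=
    fun ϑ β => contDiff_ΓN_comp hΓN hgt hΓt hφ hchart L ϑ β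
  have hTsm : ContDiff ℝ (⊤:ℕ∞) (fun z => ∑ a, ∑ b, ∑ ϑ, ∑ β,
          P.ginv z a b * P.ΓN (φ z) L ϑ β * dphi φ z a ϑ * dphi φ z b β) := by
    refine ContDiff.sum fun a _ => ContDiff.sum fun b _ => ContDiff.sum fun ϑ _ =>
      ContDiff.sum fun β _ => ?_
    exact (((hPdom.1 a b).mul (hΓNφdiff ϑ β)).mul (contDiff_dphi hφ a ϑ)).mul
      (contDiff_dphi hφ b β)
  have hlapTf : lap P (fun z => φ z L)
      = fun z => (∑ a, ∑ b, ∑ ϑ, ∑ β,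
          P.ginv z a b * P.ΓN (φ z) L ϑ β * dphi φ z a ϑ * dphi φ z b β)
        - uvar P φ 0 z L := by
    funext z
    have hz : uvar P φ 0 z L = -(lap P (fun w => φ w L) z) + ∑ a, ∑ b, ∑ ϑ, ∑ β,
        P.ginv z a b * P.ΓN (φ z) L ϑ β * dphi φ z a ϑ * dphi φ z b β := rfl
    rw [hz]; ring
  have hpdΓb : ∀ (x : Fin m → ℝ) (i : Fin m) (ϑ β : Fin (d+1)),
      |pd i (fun z => P.ΓN (φ z) L ϑ β) x|
        ≤ ((d:ℝ)+1) * ((Gs gt (φ x) + DGs gt (φ x) * (1 + Φ x)) * (|f x| + ndf x)) := by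
    intro x i ϑ β
    have h1 : (fun z => P.ΓN (φ z) L ϑ β) = fun z => Gl gt ϑ β (φ z) := by
      funext z
      exact congrFun (hGlast ϑ β) (φ z)
    rw [h1, pd_comp ((contDiff_Gl hgt ϑ β).differentiable htop3 (φ x))
      ((hφ.differentiable htop3) x) i]
    have hGx := Gs_nonneg (gt := gt) (φ x)
    have hDx := DGs_nonneg (gt := gt) (φ x)
    have hPx := hΦ0 x
    have hfx := abs_nonneg (f x)
    have hnx := hndf0 x
    have hω : ∀ ω : Fin (d+1), |pd ω (Gl gt ϑ β) (φ x) * pd i (fun z => φ z ω) x|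
        ≤ (Gs gt (φ x) + DGs gt (φ x) * (1 + Φ x)) * (|f x| + ndf x) := by
      intro ω
      rw [abs_mul]
      induction ω using Fin.lastCases with
      | last =>
        have h2 : |pd i (fun z => φ z (Fin.last d)) x| ≤ ndf x := hdphiL x i
        have h3 : |pd (Fin.last d) (Gl gt ϑ β) (φ x)| ≤ Gs gt (φ x) :=
          pd_Gl_last_bound hgt ϑ β (φ x)
        have h4 := mul_le_mul h3 h2 (abs_nonneg _) hGx
        nlinarith [mul_nonneg (mul_nonneg hDx (by linarith : (0:ℝ) ≤ 1 + Φ x))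
          (by linarith : (0:ℝ) ≤ |f x| + ndf x), mul_nonneg hGx hfx]
      | cast c =>
        have h2 : |pd i (fun z => φ z (Fin.castSucc c)) x| ≤ Φ x :=
          hdphiΦ x i (Fin.castSucc c)
        have h3 : |pd (Fin.castSucc c) (Gl gt ϑ β) (φ x)| ≤ |f x| * DGs gt (φ x) :=
          pd_Gl_castSucc_bound hgt c ϑ β (φ x)
        have h4 := mul_le_mul h3 h2 (abs_nonneg _) (mul_nonneg hfx hDx)
        nlinarith [mul_nonneg hGx hfx, mul_nonneg hGx hnx, mul_nonneg hDx hfx,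
          mul_nonneg hDx hnx, mul_nonneg (mul_nonneg hDx hnx) hPx]
    have hsum : |∑ ω, pd ω (Gl gt ϑ β) (φ x) * pd i (fun z => φ z ω) x|
        ≤ ∑ _ω : Fin (d+1), (Gs gt (φ x) + DGs gt (φ x) * (1 + Φ x)) * (|f x| + ndf x) :=
      abs_sum_le' _ _ _ fun ω _ => hω ω
    rw [Finset.sum_const, Finset.card_univ, Fintype.card_fin, nsmul_eq_mul] at hsum
    exact hsum.trans (le_of_eq (by push_cast; ring))
  have hsffid : ∀ (x : Fin m → ℝ) (a b : Fin m),
      pd a (pd b (fun z => φ z L)) x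
        = sff P φ x a b L + (∑ r, P.ΓM x r a b * dphi φ x r L)
          - ∑ ϑ, ∑ γ, P.ΓN (φ x) L ϑ γ * dphi φ x a ϑ * dphi φ x b γ := by
    intro x a b
    have hs : sff P φ x a b L = pd a (pd b (fun z => φ z L)) x
        - (∑ r, P.ΓM x r a b * dphi φ x r L)
        + ∑ ϑ, ∑ γ, P.ΓN (φ x) L ϑ γ * dphi φ x a ϑ * dphi φ x b γ := rfl
    rw [hs]; ring
  have key2 : ∃ A : (Fin m → ℝ) → ℝ, Continuous A ∧ ∀ x, 0 ≤ A x ∧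
      vnorm (fun i : Fin m =>
            lap P (fun z => pd i (fun w => φ w L - Real.pi / 2) z) x)
        ≤ A x * (|f x| + ndf x + nsff x + nv0 x) := by
    have hE10 : ∀ (x : Fin m → ℝ) (i : Fin m), (0:ℝ) ≤ (∑ a, ∑ b, ∑ ϑ, ∑ β,
            (|pd i (fun z => P.ginv z a b) x| * Gs gt (φ x) * |dphi φ x a ϑ| * |dphi φ x b β|
            + |P.ginv x a b| * (((d:ℝ)+1) * (Gs gt (φ x) + DGs gt (φ x) * (1 + Φ x)))
                * |dphi φ x a ϑ| * |dphi φ x b β|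
            + |P.ginv x a b| * Gs gt (φ x) * |pd i (fun z => dphi φ z a ϑ) x| * |dphi φ x b β|
            + |P.ginv x a b| * Gs gt (φ x) * |dphi φ x a ϑ| * |pd i (fun z => dphi φ z b β) x|)) := by
      intro x i
      have hGx := Gs_nonneg (gt := gt) (φ x)
      have hDx := DGs_nonneg (gt := gt) (φ x)
      have hPx := hΦ0 x
      refine Finset.sum_nonneg fun a _ => Finset.sum_nonneg fun b _ =>
        Finset.sum_nonneg fun ϑ _ => Finset.sum_nonneg fun β _ => ?_
      have hco : (0:ℝ) ≤ Gs gt (φ x) + DGs gt (φ x) * (1 + Φ x) := by nlinarith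
      have c1 : (0:ℝ) ≤ |pd i (fun z => P.ginv z a b) x| * Gs gt (φ x)
          * |dphi φ x a ϑ| * |dphi φ x b β| := by positivity
      have c2 : (0:ℝ) ≤ |P.ginv x a b|
          * (((d:ℝ)+1) * (Gs gt (φ x) + DGs gt (φ x) * (1 + Φ x)))
          * |dphi φ x a ϑ| * |dphi φ x b β| := by positivity
      have c3 : (0:ℝ) ≤ |P.ginv x a b| * Gs gt (φ x)
          * |pd i (fun z => dphi φ z a ϑ) x| * |dphi φ x b β| := by positivity
      have c4 : (0:ℝ) ≤ |P.ginv x a b| * Gs gt (φ x) * |dphi φ x a ϑ|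
          * |pd i (fun z => dphi φ z b β) x| := by positivity
      linarith
    have hE30 : ∀ (x : Fin m → ℝ) (i : Fin m), (0:ℝ) ≤ (∑ a, ∑ b, |pd i (fun z => P.ginv z a b) x| * (1 + (∑ r, |P.ΓM x r a b|)
            + ∑ ϑ, ∑ γ, Gs gt (φ x) * |dphi φ x a ϑ| * |dphi φ x b γ|)) := by
      intro x i
      have hGx := Gs_nonneg (gt := gt) (φ x)
      refine Finset.sum_nonneg fun a _ => Finset.sum_nonneg fun b _ => ?_
      have h1 : (0:ℝ) ≤ ∑ r, |P.ΓM x r a b| :=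
        Finset.sum_nonneg fun r _ => abs_nonneg _
      have h2 : (0:ℝ) ≤ ∑ ϑ, ∑ γ, Gs gt (φ x) * |dphi φ x a ϑ| * |dphi φ x b γ| :=
        Finset.sum_nonneg fun ϑ _ => Finset.sum_nonneg fun γ _ => by positivity
      positivity
    have hE40 : ∀ (x : Fin m → ℝ) (i : Fin m), (0:ℝ) ≤ (∑ a, ∑ b, ∑ r, |pd i (fun z => P.ginv z a b * P.ΓM z r a b) x|) :=
      fun x i => Finset.sum_nonneg fun a _ => Finset.sum_nonneg fun b _ =>
        Finset.sum_nonneg fun r _ => abs_nonneg _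
    have hper : ∀ (x : Fin m → ℝ) (i : Fin m),
        |lap P (pd i (fun z => φ z L)) x|
          ≤ ((∑ a, ∑ b, ∑ ϑ, ∑ β,
            (|pd i (fun z => P.ginv z a b) x| * Gs gt (φ x) * |dphi φ x a ϑ| * |dphi φ x b β|
            + |P.ginv x a b| * (((d:ℝ)+1) * (Gs gt (φ x) + DGs gt (φ x) * (1 + Φ x)))
                * |dphi φ x a ϑ| * |dphi φ x b β|
            + |P.ginv x a b| * Gs gt (φ x) * |pd i (fun z => dphi φ z a ϑ) x| * |dphi φ x b β|
            + |P.ginv x a b| * Gs gt (φ x) * |dphi φ x a ϑ| * |pd i (fun z => dphi φ z b β) x|))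
          + (∑ a, ∑ b, |pd i (fun z => P.ginv z a b) x| * (1 + (∑ r, |P.ΓM x r a b|)
            + ∑ ϑ, ∑ γ, Gs gt (φ x) * |dphi φ x a ϑ| * |dphi φ x b γ|))
          + (∑ a, ∑ b, ∑ r, |pd i (fun z => P.ginv z a b * P.ΓM z r a b) x|) + 1)
            * (|f x| + ndf x + nsff x + nv0 x) := by
      intro x i
      have hGx := Gs_nonneg (gt := gt) (φ x)
      have hDx := DGs_nonneg (gt := gt) (φ x)
      have hPx := hΦ0 x
      have hfx := abs_nonneg (f x)
      have hnx := hndf0 x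
      have hsx := hnsff0 x
      have hvx := hnv00 x
      have hco : (0:ℝ) ≤ Gs gt (φ x) + DGs gt (φ x) * (1 + Φ x) := by nlinarith
      rw [lap_pd_comm P hPdom (contDiff_proj_comp hφ L) i x]
      have hpdlap : pd i (lap P (fun z => φ z L)) x
          = pd i (fun z => ∑ a, ∑ b, ∑ ϑ, ∑ β,
          P.ginv z a b * P.ΓN (φ z) L ϑ β * dphi φ z a ϑ * dphi φ z b β) x
            - vvar P φ 0 x i L := by
        rw [hlapTf, pd_sub (hTsm.differentiable htop3) ((hu 0 L).differentiable htop3)]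
        rfl
      have hTexp : pd i (fun z => ∑ a, ∑ b, ∑ ϑ, ∑ β,
          P.ginv z a b * P.ΓN (φ z) L ϑ β * dphi φ z a ϑ * dphi φ z b β) x
          = ∑ a, ∑ b, ∑ ϑ, ∑ β,
            (pd i (fun z => P.ginv z a b) x * P.ΓN (φ x) L ϑ β * dphi φ x a ϑ * dphi φ x b β
            + P.ginv x a b * pd i (fun z => P.ΓN (φ z) L ϑ β) x * dphi φ x a ϑ * dphi φ x b β
            + P.ginv x a b * P.ΓN (φ x) L ϑ β * pd i (fun z => dphi φ z a ϑ) x * dphi φ x b β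
            + P.ginv x a b * P.ΓN (φ x) L ϑ β * dphi φ x a ϑ
                * pd i (fun z => dphi φ z b β) x) := by
        rw [pd_sum Finset.univ (fun a _ => (ContDiff.sum fun b _ => ContDiff.sum fun ϑ _ =>
          ContDiff.sum fun β _ => (((hPdom.1 a b).mul (hΓNφdiff ϑ β)).mul
            (contDiff_dphi hφ a ϑ)).mul (contDiff_dphi hφ b β)).differentiable htop3) i x]
        refine Finset.sum_congr rfl fun a _ => ?_
        rw [pd_sum Finset.univ (fun b _ => (ContDiff.sum fun ϑ _ =>
          ContDiff.sum fun β _ => (((hPdom.1 a b).mul (hΓNφdiff ϑ β)).mul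
            (contDiff_dphi hφ a ϑ)).mul (contDiff_dphi hφ b β)).differentiable htop3) i x]
        refine Finset.sum_congr rfl fun b _ => ?_
        rw [pd_sum Finset.univ (fun ϑ _ => (ContDiff.sum fun β _ =>
          (((hPdom.1 a b).mul (hΓNφdiff ϑ β)).mul
            (contDiff_dphi hφ a ϑ)).mul (contDiff_dphi hφ b β)).differentiable htop3) i x]
        refine Finset.sum_congr rfl fun ϑ _ => ?_
        rw [pd_sum Finset.univ (fun β _ => ((((hPdom.1 a b).mul (hΓNφdiff ϑ β)).mul
          (contDiff_dphi hφ a ϑ)).mul (contDiff_dphi hφ b β)).differentiable htop3) i x]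
        refine Finset.sum_congr rfl fun β _ => ?_
        exact pd_mul4 ((hPdom.1 a b).differentiable htop3)
          ((hΓNφdiff ϑ β).differentiable htop3)
          ((contDiff_dphi hφ a ϑ).differentiable htop3)
          ((contDiff_dphi hφ b β).differentiable htop3) i x
      have hpdTb : |pd i (fun z => ∑ a, ∑ b, ∑ ϑ, ∑ β,
          P.ginv z a b * P.ΓN (φ z) L ϑ β * dphi φ z a ϑ * dphi φ z b β) x|
          ≤ (|f x| + ndf x + nsff x + nv0 x) * (∑ a, ∑ b, ∑ ϑ, ∑ β,
            (|pd i (fun z => P.ginv z a b) x| * Gs gt (φ x) * |dphi φ x a ϑ| * |dphi φ x b β|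
            + |P.ginv x a b| * (((d:ℝ)+1) * (Gs gt (φ x) + DGs gt (φ x) * (1 + Φ x)))
                * |dphi φ x a ϑ| * |dphi φ x b β|
            + |P.ginv x a b| * Gs gt (φ x) * |pd i (fun z => dphi φ z a ϑ) x| * |dphi φ x b β|
            + |P.ginv x a b| * Gs gt (φ x) * |dphi φ x a ϑ| * |pd i (fun z => dphi φ z b β) x|)) := by
        rw [hTexp]
        simp only [Finset.mul_sum]
        refine abs_sum_le' _ _ _ fun a _ => abs_sum_le' _ _ _ fun b _ =>
          abs_sum_le' _ _ _ fun ϑ _ => abs_sum_le' _ _ _ fun β _ => ?_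
        have hc1 : (0:ℝ) ≤ |pd i (fun z => P.ginv z a b) x| * Gs gt (φ x)
            * |dphi φ x a ϑ| * |dphi φ x b β| := by positivity
        have hc2 : (0:ℝ) ≤ |P.ginv x a b|
            * (((d:ℝ)+1) * (Gs gt (φ x) + DGs gt (φ x) * (1 + Φ x)))
            * |dphi φ x a ϑ| * |dphi φ x b β| := by positivity
        have hc3 : (0:ℝ) ≤ |P.ginv x a b| * Gs gt (φ x)
            * |pd i (fun z => dphi φ z a ϑ) x| * |dphi φ x b β| := by positivity
        have hc4 : (0:ℝ) ≤ |P.ginv x a b| * Gs gt (φ x) * |dphi φ x a ϑ|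
            * |pd i (fun z => dphi φ z b β) x| := by positivity
        have b1 : |pd i (fun z => P.ginv z a b) x * P.ΓN (φ x) L ϑ β * dphi φ x a ϑ
              * dphi φ x b β|
            ≤ (|f x| + ndf x + nsff x + nv0 x) * (|pd i (fun z => P.ginv z a b) x| * Gs gt (φ x)
              * |dphi φ x a ϑ| * |dphi φ x b β|) := by
          calc _ ≤ |pd i (fun z => P.ginv z a b) x| * (|f x| * Gs gt (φ x))
                * |dphi φ x a ϑ| * |dphi φ x b β| :=
              mul4_le le_rfl (hB1 x ϑ β) le_rfl le_rfl (abs_nonneg _)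
                (mul_nonneg hfx hGx) (abs_nonneg _)
            _ = |f x| * (|pd i (fun z => P.ginv z a b) x| * Gs gt (φ x)
                * |dphi φ x a ϑ| * |dphi φ x b β|) := by ring
            _ ≤ _ := mul_le_mul_of_nonneg_right (by linarith) hc1
        have hBco : (0:ℝ) ≤ ((d:ℝ)+1) * ((Gs gt (φ x) + DGs gt (φ x) * (1 + Φ x))
            * (|f x| + ndf x)) := by positivity
        have b2 : |P.ginv x a b * pd i (fun z => P.ΓN (φ z) L ϑ β) x * dphi φ x a ϑ
              * dphi φ x b β|
            ≤ (|f x| + ndf x + nsff x + nv0 x) * (|P.ginv x a b| * (((d:ℝ)+1) * (Gs gt (φ x)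
              + DGs gt (φ x) * (1 + Φ x))) * |dphi φ x a ϑ| * |dphi φ x b β|) := by
          calc _ ≤ |P.ginv x a b| * (((d:ℝ)+1) * ((Gs gt (φ x)
                + DGs gt (φ x) * (1 + Φ x)) * (|f x| + ndf x)))
                * |dphi φ x a ϑ| * |dphi φ x b β| :=
              mul4_le le_rfl (hpdΓb x i ϑ β) le_rfl le_rfl (abs_nonneg _) hBco
                (abs_nonneg _)
            _ = (|f x| + ndf x) * (|P.ginv x a b| * (((d:ℝ)+1) * (Gs gt (φ x)
                + DGs gt (φ x) * (1 + Φ x))) * |dphi φ x a ϑ| * |dphi φ x b β|) := by ring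
            _ ≤ _ := mul_le_mul_of_nonneg_right (by linarith) hc2
        have b3 : |P.ginv x a b * P.ΓN (φ x) L ϑ β * pd i (fun z => dphi φ z a ϑ) x
              * dphi φ x b β|
            ≤ (|f x| + ndf x + nsff x + nv0 x) * (|P.ginv x a b| * Gs gt (φ x)
              * |pd i (fun z => dphi φ z a ϑ) x| * |dphi φ x b β|) := by
          calc _ ≤ |P.ginv x a b| * (|f x| * Gs gt (φ x))
                * |pd i (fun z => dphi φ z a ϑ) x| * |dphi φ x b β| :=
              mul4_le le_rfl (hB1 x ϑ β) le_rfl le_rfl (abs_nonneg _)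
                (mul_nonneg hfx hGx) (abs_nonneg _)
            _ = |f x| * (|P.ginv x a b| * Gs gt (φ x)
                * |pd i (fun z => dphi φ z a ϑ) x| * |dphi φ x b β|) := by ring
            _ ≤ _ := mul_le_mul_of_nonneg_right (by linarith) hc3
        have b4 : |P.ginv x a b * P.ΓN (φ x) L ϑ β * dphi φ x a ϑ
              * pd i (fun z => dphi φ z b β) x|
            ≤ (|f x| + ndf x + nsff x + nv0 x) * (|P.ginv x a b| * Gs gt (φ x) * |dphi φ x a ϑ|
              * |pd i (fun z => dphi φ z b β) x|) := by
          calc _ ≤ |P.ginv x a b| * (|f x| * Gs gt (φ x)) * |dphi φ x a ϑ|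
                * |pd i (fun z => dphi φ z b β) x| :=
              mul4_le le_rfl (hB1 x ϑ β) le_rfl le_rfl (abs_nonneg _)
                (mul_nonneg hfx hGx) (abs_nonneg _)
            _ = |f x| * (|P.ginv x a b| * Gs gt (φ x) * |dphi φ x a ϑ|
                * |pd i (fun z => dphi φ z b β) x|) := by ring
            _ ≤ _ := mul_le_mul_of_nonneg_right (by linarith) hc4
        have habs := abs_add4
          (pd i (fun z => P.ginv z a b) x * P.ΓN (φ x) L ϑ β * dphi φ x a ϑ * dphi φ x b β)
          (P.ginv x a b * pd i (fun z => P.ΓN (φ z) L ϑ β) x * dphi φ x a ϑ * dphi φ x b β)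
          (P.ginv x a b * P.ΓN (φ x) L ϑ β * pd i (fun z => dphi φ z a ϑ) x * dphi φ x b β)
          (P.ginv x a b * P.ΓN (φ x) L ϑ β * dphi φ x a ϑ * pd i (fun z => dphi φ z b β) x)
        linarith
      have hvv : |vvar P φ 0 x i L| ≤ nv0 x :=
        abs_le_vnorm (fun i' : Fin m => vvar P φ 0 x i' L) i
      have hb3 : |∑ a, ∑ b, pd i (fun z => P.ginv z a b) x
            * pd a (pd b (fun z => φ z L)) x|
          ≤ (|f x| + ndf x + nsff x + nv0 x) * (∑ a, ∑ b, |pd i (fun z => P.ginv z a b) x| * (1 + (∑ r, |P.ΓM x r a b|)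
            + ∑ ϑ, ∑ γ, Gs gt (φ x) * |dphi φ x a ϑ| * |dphi φ x b γ|)) := by
        simp only [Finset.mul_sum]
        refine abs_sum_le' _ _ _ fun a _ => abs_sum_le' _ _ _ fun b _ => ?_
        rw [abs_mul]
        have h1 : |sff P φ x a b L| ≤ nsff x :=
          abs_le_vnorm (fun p : Fin m × Fin m × Fin (d+1) => sff P φ x p.1 p.2.1 p.2.2)
            (a, b, L)
        have h2 : |∑ r, P.ΓM x r a b * dphi φ x r L| ≤ (∑ r, |P.ΓM x r a b|) * ndf x := by
          rw [Finset.sum_mul]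
          refine abs_sum_le' _ _ _ fun r _ => ?_
          rw [abs_mul]
          exact mul_le_mul_of_nonneg_left (hdphiL x r) (abs_nonneg _)
        have h3 : |∑ ϑ, ∑ γ, P.ΓN (φ x) L ϑ γ * dphi φ x a ϑ * dphi φ x b γ|
            ≤ |f x| * ∑ ϑ, ∑ γ, Gs gt (φ x) * |dphi φ x a ϑ| * |dphi φ x b γ| := by
          simp only [Finset.mul_sum]
          refine abs_sum_le' _ _ _ fun ϑ _ => abs_sum_le' _ _ _ fun γ _ => ?_
          rw [abs_mul, abs_mul]
          calc |P.ΓN (φ x) L ϑ γ| * |dphi φ x a ϑ| * |dphi φ x b γ|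
              ≤ (|f x| * Gs gt (φ x)) * |dphi φ x a ϑ| * |dphi φ x b γ| :=
                mul3_le (hB1 x ϑ γ) le_rfl le_rfl (mul_nonneg hfx hGx) (abs_nonneg _)
            _ = |f x| * (Gs gt (φ x) * |dphi φ x a ϑ| * |dphi φ x b γ|) := by ring
        have hS0 : (0:ℝ) ≤ ∑ r, |P.ΓM x r a b| :=
          Finset.sum_nonneg fun r _ => abs_nonneg _
        have hC0 : (0:ℝ) ≤ ∑ ϑ, ∑ γ, Gs gt (φ x) * |dphi φ x a ϑ| * |dphi φ x b γ| :=
          Finset.sum_nonneg fun ϑ _ => Finset.sum_nonneg fun γ _ => by positivity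
        have hpdpd : |pd a (pd b (fun z => φ z L)) x|
            ≤ (1 + (∑ r, |P.ΓM x r a b|)
              + ∑ ϑ, ∑ γ, Gs gt (φ x) * |dphi φ x a ϑ| * |dphi φ x b γ|)
              * (|f x| + ndf x + nsff x + nv0 x) := by
          rw [hsffid x a b]
          have habs := abs_add_sub3 (sff P φ x a b L)
            (∑ r, P.ΓM x r a b * dphi φ x r L)
            (∑ ϑ, ∑ γ, P.ΓN (φ x) L ϑ γ * dphi φ x a ϑ * dphi φ x b γ)
          have e1 : (∑ r, |P.ΓM x r a b|) * ndf x
              ≤ (∑ r, |P.ΓM x r a b|) * (|f x| + ndf x + nsff x + nv0 x) :=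
            mul_le_mul_of_nonneg_left (by linarith) hS0
          have e2 : |f x| * (∑ ϑ, ∑ γ, Gs gt (φ x) * |dphi φ x a ϑ| * |dphi φ x b γ|)
              ≤ (∑ ϑ, ∑ γ, Gs gt (φ x) * |dphi φ x a ϑ| * |dphi φ x b γ|) * (|f x| + ndf x + nsff x + nv0 x) := by
            rw [mul_comm]
            exact mul_le_mul_of_nonneg_left (by linarith) hC0
          have e3 : (1 + (∑ r, |P.ΓM x r a b|)
              + ∑ ϑ, ∑ γ, Gs gt (φ x) * |dphi φ x a ϑ| * |dphi φ x b γ|) * (|f x| + ndf x + nsff x + nv0 x)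
              = (|f x| + ndf x + nsff x + nv0 x) + (∑ r, |P.ΓM x r a b|) * (|f x| + ndf x + nsff x + nv0 x)
                + (∑ ϑ, ∑ γ, Gs gt (φ x) * |dphi φ x a ϑ| * |dphi φ x b γ|) * (|f x| + ndf x + nsff x + nv0 x) := by
            ring
          linarith
        calc |pd i (fun z => P.ginv z a b) x| * |pd a (pd b (fun z => φ z L)) x|
            ≤ |pd i (fun z => P.ginv z a b) x| * ((1 + (∑ r, |P.ΓM x r a b|)
              + ∑ ϑ, ∑ γ, Gs gt (φ x) * |dphi φ x a ϑ| * |dphi φ x b γ|) * (|f x| + ndf x + nsff x + nv0 x)) :=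
              mul_le_mul_of_nonneg_left hpdpd (abs_nonneg _)
          _ = (|f x| + ndf x + nsff x + nv0 x) * (|pd i (fun z => P.ginv z a b) x| * (1 + (∑ r, |P.ΓM x r a b|)
              + ∑ ϑ, ∑ γ, Gs gt (φ x) * |dphi φ x a ϑ| * |dphi φ x b γ|)) := by ring
      have hb4 : |∑ a, ∑ b, ∑ r, pd i (fun z => P.ginv z a b * P.ΓM z r a b) x
            * pd r (fun z => φ z L) x|
          ≤ (|f x| + ndf x + nsff x + nv0 x) * (∑ a, ∑ b, ∑ r, |pd i (fun z => P.ginv z a b * P.ΓM z r a b) x|) := by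
        simp only [Finset.mul_sum]
        refine abs_sum_le' _ _ _ fun a _ => abs_sum_le' _ _ _ fun b _ =>
          abs_sum_le' _ _ _ fun r _ => ?_
        rw [abs_mul]
        have h1 : |pd r (fun z => φ z L) x| ≤ ndf x := hdphiL x r
        calc |pd i (fun z => P.ginv z a b * P.ΓM z r a b) x| * |pd r (fun z => φ z L) x|
            ≤ |pd i (fun z => P.ginv z a b * P.ΓM z r a b) x| * (|f x| + ndf x + nsff x + nv0 x) :=
              mul_le_mul_of_nonneg_left (by linarith) (abs_nonneg _)
          _ = (|f x| + ndf x + nsff x + nv0 x) * |pd i (fun z => P.ginv z a b * P.ΓM z r a b) x| := by ring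
      rw [hpdlap]
      have habs := abs_comb4
        (pd i (fun z => ∑ a, ∑ b, ∑ ϑ, ∑ β,
          P.ginv z a b * P.ΓN (φ z) L ϑ β * dphi φ z a ϑ * dphi φ z b β) x)
        (vvar P φ 0 x i L)
        (∑ a, ∑ b, pd i (fun z => P.ginv z a b) x * pd a (pd b (fun z => φ z L)) x)
        (∑ a, ∑ b, ∑ r, pd i (fun z => P.ginv z a b * P.ΓM z r a b) x
          * pd r (fun z => φ z L) x)
      have hexp : ((∑ a, ∑ b, ∑ ϑ, ∑ β,
            (|pd i (fun z => P.ginv z a b) x| * Gs gt (φ x) * |dphi φ x a ϑ| * |dphi φ x b β|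
            + |P.ginv x a b| * (((d:ℝ)+1) * (Gs gt (φ x) + DGs gt (φ x) * (1 + Φ x)))
                * |dphi φ x a ϑ| * |dphi φ x b β|
            + |P.ginv x a b| * Gs gt (φ x) * |pd i (fun z => dphi φ z a ϑ) x| * |dphi φ x b β|
            + |P.ginv x a b| * Gs gt (φ x) * |dphi φ x a ϑ| * |pd i (fun z => dphi φ z b β) x|))
          + (∑ a, ∑ b, |pd i (fun z => P.ginv z a b) x| * (1 + (∑ r, |P.ΓM x r a b|)
            + ∑ ϑ, ∑ γ, Gs gt (φ x) * |dphi φ x a ϑ| * |dphi φ x b γ|))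
          + (∑ a, ∑ b, ∑ r, |pd i (fun z => P.ginv z a b * P.ΓM z r a b) x|) + 1) * (|f x| + ndf x + nsff x + nv0 x)
          = (|f x| + ndf x + nsff x + nv0 x) * (∑ a, ∑ b, ∑ ϑ, ∑ β,
            (|pd i (fun z => P.ginv z a b) x| * Gs gt (φ x) * |dphi φ x a ϑ| * |dphi φ x b β|
            + |P.ginv x a b| * (((d:ℝ)+1) * (Gs gt (φ x) + DGs gt (φ x) * (1 + Φ x)))
                * |dphi φ x a ϑ| * |dphi φ x b β|
            + |P.ginv x a b| * Gs gt (φ x) * |pd i (fun z => dphi φ z a ϑ) x| * |dphi φ x b β|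
            + |P.ginv x a b| * Gs gt (φ x) * |dphi φ x a ϑ| * |pd i (fun z => dphi φ z b β) x|))
            + (|f x| + ndf x + nsff x + nv0 x) * (∑ a, ∑ b, |pd i (fun z => P.ginv z a b) x| * (1 + (∑ r, |P.ΓM x r a b|)
            + ∑ ϑ, ∑ γ, Gs gt (φ x) * |dphi φ x a ϑ| * |dphi φ x b γ|))
            + (|f x| + ndf x + nsff x + nv0 x) * (∑ a, ∑ b, ∑ r, |pd i (fun z => P.ginv z a b * P.ΓM z r a b) x|) + (|f x| + ndf x + nsff x + nv0 x) := by ring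
      linarith
    refine ⟨fun x => Real.sqrt (Fintype.card (Fin m))
        * ∑ i', ((∑ a, ∑ b, ∑ ϑ, ∑ β,
            (|pd i' (fun z => P.ginv z a b) x| * Gs gt (φ x) * |dphi φ x a ϑ| * |dphi φ x b β|
            + |P.ginv x a b| * (((d:ℝ)+1) * (Gs gt (φ x) + DGs gt (φ x) * (1 + Φ x)))
                * |dphi φ x a ϑ| * |dphi φ x b β|
            + |P.ginv x a b| * Gs gt (φ x) * |pd i' (fun z => dphi φ z a ϑ) x| * |dphi φ x b β|
            + |P.ginv x a b| * Gs gt (φ x) * |dphi φ x a ϑ| * |pd i' (fun z => dphi φ z b β) x|))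
          + (∑ a, ∑ b, |pd i' (fun z => P.ginv z a b) x| * (1 + (∑ r, |P.ΓM x r a b|)
            + ∑ ϑ, ∑ γ, Gs gt (φ x) * |dphi φ x a ϑ| * |dphi φ x b γ|))
          + (∑ a, ∑ b, ∑ r, |pd i' (fun z => P.ginv z a b * P.ΓM z r a b) x|) + 1), ?_, ?_⟩
    · refine continuous_const.mul ?_
      refine continuous_finset_sum _ fun i' _ => ?_
      refine Continuous.add (Continuous.add (Continuous.add ?_ ?_) ?_) continuous_const
      · refine continuous_finset_sum _ fun a _ => continuous_finset_sum _ fun b _ =>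
          continuous_finset_sum _ fun ϑ _ => continuous_finset_sum _ fun β _ => ?_
        refine Continuous.add (Continuous.add (Continuous.add ?_ ?_) ?_) ?_
        · exact (((contDiff_pd i' (hPdom.1 a b)).continuous.abs.mul hGscont).mul
            (hdphic a ϑ).abs).mul (hdphic b β).abs
        · exact (((hginvc a b).abs.mul (continuous_const.mul (hGscont.add
            (hDGscont.mul (continuous_const.add hΦcont))))).mul
            (hdphic a ϑ).abs).mul (hdphic b β).abs
        · exact (((hginvc a b).abs.mul hGscont).mul
            (contDiff_pd i' (contDiff_dphi hφ a ϑ)).continuous.abs).mul (hdphic b β).abs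
        · exact (((hginvc a b).abs.mul hGscont).mul (hdphic a ϑ).abs).mul
            (contDiff_pd i' (contDiff_dphi hφ b β)).continuous.abs
      · refine continuous_finset_sum _ fun a _ => continuous_finset_sum _ fun b _ => ?_
        refine (contDiff_pd i' (hPdom.1 a b)).continuous.abs.mul ?_
        refine Continuous.add (Continuous.add continuous_const ?_) ?_
        · exact continuous_finset_sum _ fun r _ => (hPdom.2 r a b).continuous.abs
        · exact continuous_finset_sum _ fun ϑ _ => continuous_finset_sum _ fun γ _ =>
            (hGscont.mul (hdphic a ϑ).abs).mul (hdphic b γ).abs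
      · refine continuous_finset_sum _ fun a _ => continuous_finset_sum _ fun b _ =>
          continuous_finset_sum _ fun r _ => ?_
        exact (contDiff_pd i' ((hPdom.1 a b).mul (hPdom.2 r a b))).continuous.abs
    · intro x
      have hsum0 : (0:ℝ) ≤ ∑ i', ((∑ a, ∑ b, ∑ ϑ, ∑ β,
            (|pd i' (fun z => P.ginv z a b) x| * Gs gt (φ x) * |dphi φ x a ϑ| * |dphi φ x b β|
            + |P.ginv x a b| * (((d:ℝ)+1) * (Gs gt (φ x) + DGs gt (φ x) * (1 + Φ x)))
                * |dphi φ x a ϑ| * |dphi φ x b β|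
            + |P.ginv x a b| * Gs gt (φ x) * |pd i' (fun z => dphi φ z a ϑ) x| * |dphi φ x b β|
            + |P.ginv x a b| * Gs gt (φ x) * |dphi φ x a ϑ| * |pd i' (fun z => dphi φ z b β) x|))
          + (∑ a, ∑ b, |pd i' (fun z => P.ginv z a b) x| * (1 + (∑ r, |P.ΓM x r a b|)
            + ∑ ϑ, ∑ γ, Gs gt (φ x) * |dphi φ x a ϑ| * |dphi φ x b γ|))
          + (∑ a, ∑ b, ∑ r, |pd i' (fun z => P.ginv z a b * P.ΓM z r a b) x|) + 1) := by
        refine Finset.sum_nonneg fun i' _ => ?_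
        have := hE10 x i'
        have := hE30 x i'
        have := hE40 x i'
        linarith
      constructor
      · exact mul_nonneg (Real.sqrt_nonneg _) hsum0
      · have hre : (fun i : Fin m =>
            lap P (fun z => pd i (fun w => φ w L - Real.pi / 2) z) x)
            = fun i : Fin m => lap P (pd i (fun z => φ z L)) x := by
          funext i
          exact congrArg (fun F => lap P F x) (funext fun z => pd_sub_const i z _)
        rw [hre]
        have hsmall0 : (0:ℝ) ≤ (|f x| + ndf x + nsff x + nv0 x) := by
          have := abs_nonneg (f x)
          have := hndf0 x
          have := hnsff0 x
          have := hnv00 x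
          linarith
        have hbound : ∀ i : Fin m, |lap P (pd i (fun z => φ z L)) x|
            ≤ (∑ i', ((∑ a, ∑ b, ∑ ϑ, ∑ β,
            (|pd i' (fun z => P.ginv z a b) x| * Gs gt (φ x) * |dphi φ x a ϑ| * |dphi φ x b β|
            + |P.ginv x a b| * (((d:ℝ)+1) * (Gs gt (φ x) + DGs gt (φ x) * (1 + Φ x)))
                * |dphi φ x a ϑ| * |dphi φ x b β|
            + |P.ginv x a b| * Gs gt (φ x) * |pd i' (fun z => dphi φ z a ϑ) x| * |dphi φ x b β|
            + |P.ginv x a b| * Gs gt (φ x) * |dphi φ x a ϑ| * |pd i' (fun z => dphi φ z b β) x|))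
          + (∑ a, ∑ b, |pd i' (fun z => P.ginv z a b) x| * (1 + (∑ r, |P.ΓM x r a b|)
            + ∑ ϑ, ∑ γ, Gs gt (φ x) * |dphi φ x a ϑ| * |dphi φ x b γ|))
          + (∑ a, ∑ b, ∑ r, |pd i' (fun z => P.ginv z a b * P.ΓM z r a b) x|) + 1)) * (|f x| + ndf x + nsff x + nv0 x) := by
          intro i
          refine (hper x i).trans (mul_le_mul_of_nonneg_right ?_ hsmall0)
          refine Finset.single_le_sum (f := fun i' => ((∑ a, ∑ b, ∑ ϑ, ∑ β,
            (|pd i' (fun z => P.ginv z a b) x| * Gs gt (φ x) * |dphi φ x a ϑ| * |dphi φ x b β|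
            + |P.ginv x a b| * (((d:ℝ)+1) * (Gs gt (φ x) + DGs gt (φ x) * (1 + Φ x)))
                * |dphi φ x a ϑ| * |dphi φ x b β|
            + |P.ginv x a b| * Gs gt (φ x) * |pd i' (fun z => dphi φ z a ϑ) x| * |dphi φ x b β|
            + |P.ginv x a b| * Gs gt (φ x) * |dphi φ x a ϑ| * |pd i' (fun z => dphi φ z b β) x|))
          + (∑ a, ∑ b, |pd i' (fun z => P.ginv z a b) x| * (1 + (∑ r, |P.ΓM x r a b|)
            + ∑ ϑ, ∑ γ, Gs gt (φ x) * |dphi φ x a ϑ| * |dphi φ x b γ|))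
          + (∑ a, ∑ b, ∑ r, |pd i' (fun z => P.ginv z a b * P.ΓM z r a b) x|) + 1)) ?_ (Finset.mem_univ i)
          intro i' _
          have := hE10 x i'
          have := hE30 x i'
          have := hE40 x i'
          linarith
        have hv := vnorm_le_of_forall (fun i : Fin m => lap P (pd i (fun z => φ z L)) x)
          (mul_nonneg hsum0 hsmall0) hbound
        exact hv.trans (le_of_eq (by ring))
  -- Assembly
  obtain ⟨A1, hA1c, hA1⟩ := key1
  obtain ⟨A2, hA2c, hA2⟩ := key2
  obtain ⟨A3, hA3c, hA3⟩ := key3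
  obtain ⟨C, hC0, hCb⟩ := exists_compact_bound hDcpt ((hA1c.add hA2c).add hA3c)
  refine ⟨C, hC0, fun x hx => ?_⟩
  have hxD : x ∈ closure D := subset_closure hx
  have hCx : A1 x + A2 x + A3 x ≤ C := hCb x hxD
  have h1 := hA1 x
  have h2 := hA2 x
  have h3 := hA3 x
  have hb1 : A1 x ≤ C := by linarith [h2.1, h3.1]
  have hb2 : A2 x ≤ C := by linarith [h1.1, h3.1]
  have hb3 : A3 x ≤ C := by linarith [h1.1, h2.1]
  have hfx0 := abs_nonneg (f x)
  refine ⟨?_, ?_, ?_⟩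
  · exact h1.2.trans (mul_le_mul_of_nonneg_right hb1 (by positivity))
  · refine h2.2.trans (mul_le_mul_of_nonneg_right hb2 ?_)
    have := hndf0 x; have := hnsff0 x; have := hnv00 x
    positivity
  · intro j hj
    refine (h3.2 j hj).trans (mul_le_mul_of_nonneg_right hb3 ?_)
    have := hndf0 x
    positivity

end Polyharm
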